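/- arXiv:2401.00156 — 11 statements merged into one kernel-verified Lean document; each statement's English description precedes it below -/
import Mathlib

section
/- Let p be a prime and let N be a nilpotent normal subgroup of a finite group G such that the largest normal p'-subgroup O_{p'}(N) of N (equivalently, the unique Hall p'-subgroup of the nilpotent group N) is contained in the center Z(G). Then the map R ↦ RN/N is a bijection from the set of radical p-subgroups of G onto the set of radical p-subgroups of G/N. -/
/-- The largest normal `p`-subgroup `O_p(G)` of a group `G`:
the join of all normal `p`-subgroups of `G`. -/
def pCore' (p : ℕ) (G : Type*) [Group G] : Subgroup G :=
  sSup {H : Subgroup G | H.Normal ∧ IsPGroup p H}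

/-- `Q` is a radical `p`-subgroup of `G` if `Q = O_p(N_G(Q))`. -/
def IsRadicalPSubgroup (p : ℕ) {G : Type*} [Group G] (Q : Subgroup G) : Prop :=
  Q.subgroupOf (Subgroup.normalizer (Q : Set G)) = pCore' p (Subgroup.normalizer (Q : Set G))

/-- The largest normal `p'`-subgroup `O_{p'}(G)` of a finite group `G`:
the join of all normal subgroups of order coprime to `p`. -/
def pPrimeCore (p : ℕ) (G : Type*) [Group G] : Subgroup G :=
  sSup {H : Subgroup G | H.Normal ∧ ¬ p ∣ Nat.card H}

open Subgroup
section helpers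

variable {G : Type*} [Group G] {p : ℕ}

lemma eq_one_of_pelem_p'elem (hp : p.Prime) {x : G} {k : ℕ} (h1 : x ^ p ^ k = 1)
    (h2 : ¬ p ∣ orderOf x) : x = 1 := by
  have hd : orderOf x ∣ p ^ k := orderOf_dvd_of_pow_eq_one h1
  obtain ⟨j, hj, he⟩ := (Nat.dvd_prime_pow hp).mp hd
  rcases Nat.eq_zero_or_pos j with rfl | hj0
  · simpa [orderOf_eq_one_iff] using he
  · exact absurd (he ▸ dvd_pow_self p hj0.ne') h2

lemma conj_pelem {x g : G} {k : ℕ} (h : x ^ p ^ k = 1) : (g * x * g⁻¹) ^ p ^ k = 1 := by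
  have := (MulAut.conj g).toMonoidHom.map_pow x (p ^ k)
  simp only [MulEquiv.toMonoidHom_eq_coe, MonoidHom.coe_coe, MulAut.conj_apply] at this
  rw [← this, h, mul_one, mul_inv_cancel]

/-- Any element of a finite group decomposes as a commuting product of a `p`-element and a
`p'`-element, both powers of the original element. -/
lemma exists_pelem_mul_p'elem [Finite G] (hp : p.Prime) (x : G) :
    ∃ c d : ℕ, x = x ^ c * x ^ d ∧ (∃ k, (x ^ c) ^ p ^ k = 1) ∧ ¬ p ∣ orderOf (x ^ d) := by
  set n := orderOf x with hn
  have hn0 : n ≠ 0 := (orderOf_pos x).ne'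
  set k := n.factorization p
  set m := n / p ^ k with hm
  have hco : Nat.Coprime (p ^ k) m := (Nat.coprime_ordCompl hp hn0).pow_left _
  have hnm : p ^ k * m = n := Nat.ordProj_mul_ordCompl_eq_self n p
  obtain ⟨c, hc1, hc2⟩ := Nat.chineseRemainder hco 1 0
  obtain ⟨d, hd1, hd2⟩ := Nat.chineseRemainder hco 0 1
  refine ⟨c, d, ?_, ⟨k, ?_⟩, ?_⟩
  · rw [← pow_add (a := x)]
    nth_rewrite 1 [← pow_one x]
    refine pow_eq_pow_iff_modEq.mpr ?_
    rw [← hn, ← hnm]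
    exact (Nat.modEq_and_modEq_iff_modEq_mul hco).mp
      ⟨by simpa using (hc1.add hd1).symm, by simpa using (hc2.add hd2).symm⟩
  · rw [← pow_mul]
    apply orderOf_dvd_iff_pow_eq_one.mp
    rw [← hn, ← hnm, mul_comm c (p ^ k)]
    exact Nat.mul_dvd_mul_left _ (Nat.modEq_zero_iff_dvd.mp hc2)
  · intro hcon
    have hdm : orderOf (x ^ d) ∣ m := by
      apply orderOf_dvd_of_pow_eq_one
      rw [← pow_mul]
      apply orderOf_dvd_iff_pow_eq_one.mp
      rw [← hn, ← hnm, mul_comm (p ^ k) m, mul_comm d m]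
      exact Nat.mul_dvd_mul_left _ (Nat.modEq_zero_iff_dvd.mp hd1)
    exact Nat.not_dvd_ordCompl hp hn0 (hcon.trans hdm)

end helpers

section pCoreFacts

variable {G : Type*} [Group G] {p : ℕ}

lemma le_pCore' {Q : Subgroup G} (h1 : Q.Normal) (h2 : IsPGroup p Q) : Q ≤ pCore' p G :=
  le_sSup ⟨h1, h2⟩

variable [Finite G]

lemma pCore'_eq_normalCore (hp : p.Prime) (P : Sylow p G) :
    pCore' p G = (P : Subgroup G).normalCore := by
  haveI : Fact p.Prime := ⟨hp⟩
  apply le_antisymm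
  · apply sSup_le
    rintro Q ⟨h1, h2⟩
    haveI := h1
    rw [normal_le_normalCore]
    obtain ⟨Q₀, hQ₀⟩ := h2.exists_le_sylow
    obtain ⟨g, hg⟩ := MulAction.exists_smul_eq G Q₀ P
    intro x hx
    have hx' : g⁻¹ * x * g⁻¹⁻¹ ∈ Q := h1.conj_mem x hx g⁻¹
    have : g⁻¹ * x * g ∈ (Q₀ : Subgroup G) := by
      simpa using hQ₀ hx'
    have hmem : x ∈ ((g • Q₀ : Sylow p G) : Subgroup G) := by
      rw [Sylow.smul_def, Sylow.pointwise_smul_def]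
      rw [Subgroup.mem_pointwise_smul_iff_inv_smul_mem]
      simpa [MulAut.smul_def] using this
    rwa [hg] at hmem
  · exact le_sSup ⟨inferInstance, P.isPGroup'.to_le (P : Subgroup G).normalCore_le⟩

lemma pCore'_normal (hp : p.Prime) : (pCore' p G).Normal := by
  haveI : Fact p.Prime := ⟨hp⟩
  obtain ⟨P⟩ : Nonempty (Sylow p G) := inferInstance
  rw [pCore'_eq_normalCore hp P]
  infer_instance

lemma pCore'_pgroup (hp : p.Prime) : IsPGroup p (pCore' p G) := by
  haveI : Fact p.Prime := ⟨hp⟩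
  obtain ⟨P⟩ : Nonempty (Sylow p G) := inferInstance
  rw [pCore'_eq_normalCore hp P]
  exact P.isPGroup'.to_le (P : Subgroup G).normalCore_le

end pCoreFacts

section Op

variable {G : Type*} [Group G] (p : ℕ)

/-- `O_p(H)`, viewed as a subgroup of the ambient group. -/
def Op (H : Subgroup G) : Subgroup G := (pCore' p H).map H.subtype

variable {p}

lemma Op_le (H : Subgroup G) : Op p H ≤ H := by
  rintro x ⟨y, _, rfl⟩
  exact y.2

variable [Finite G]

lemma Op_pgroup (hp : p.Prime) (H : Subgroup G) : IsPGroup p (Op p H) :=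
  (pCore'_pgroup hp).map _

lemma Op_conj_mem (hp : p.Prime) (H : Subgroup G) {g x : G} (hg : g ∈ H) (hx : x ∈ Op p H) :
    g * x * g⁻¹ ∈ Op p H := by
  obtain ⟨y, hy, rfl⟩ := hx
  haveI := pCore'_normal (G := H) hp
  exact ⟨⟨g, hg⟩ * y * ⟨g, hg⟩⁻¹, this.conj_mem y hy ⟨g, hg⟩, rfl⟩

lemma le_Op (hp : p.Prime) {H K : Subgroup G} (hKH : K ≤ H) (hK : IsPGroup p K)
    (hcon : ∀ g ∈ H, ∀ x ∈ K, g * x * g⁻¹ ∈ K) : K ≤ Op p H := by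
  have h1 : (K.subgroupOf H).Normal := by
    constructor
    rintro n hn g
    rw [Subgroup.mem_subgroupOf] at hn ⊢
    exact hcon g g.2 n hn
  have h2 : IsPGroup p (K.subgroupOf H) := hK.comap_subtype
  have h3 : K.subgroupOf H ≤ pCore' p H := le_pCore' h1 h2
  have h4 := Subgroup.map_mono (f := H.subtype) h3
  rwa [Subgroup.subgroupOf_map_subtype, inf_of_le_left hKH] at h4

lemma isRadical_iff (hp : p.Prime) {Q : Subgroup G} :
    IsRadicalPSubgroup p Q ↔ Q = Op p (Subgroup.normalizer (SetLike.coe Q)) := by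
  rw [IsRadicalPSubgroup, ← (Subgroup.map_injective (Subgroup.normalizer (SetLike.coe Q)).subtype_injective).eq_iff]
  rw [Subgroup.subgroupOf_map_subtype, inf_of_le_left Q.le_normalizer]
  rfl

lemma Op_self (hp : p.Prime) {Q : Subgroup G} (hQ : IsPGroup p Q) : Op p Q = Q :=
  le_antisymm (Op_le Q) (le_Op hp le_rfl hQ (fun g hg x hx => Q.mul_mem (Q.mul_mem hg hx) (Q.inv_mem hg)))

lemma Op_conj_of_normalizes (hp : p.Prime) {K : Subgroup G} {g : G} (hg : g ∈ (Subgroup.normalizer (SetLike.coe K)))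
    {x : G} (hx : x ∈ Op p K) : g * x * g⁻¹ ∈ Op p K := by
  have key : (Op p K).map (MulAut.conj g).toMonoidHom ≤ Op p K := by
    apply le_Op hp
    · rintro y ⟨z, hz, rfl⟩
      exact (Subgroup.mem_normalizer_iff.mp hg z).mp (Op_le K hz)
    · exact (Op_pgroup hp K).map _
    · rintro k hk y ⟨z, hz, rfl⟩
      refine ⟨(g⁻¹ * k * g) * z * (g⁻¹ * k * g)⁻¹, ?_, ?_⟩
      · refine Op_conj_mem hp K ?_ hz
        have := (Subgroup.mem_normalizer_iff.mp ((Subgroup.normalizer (SetLike.coe K)).inv_mem hg) k).mp hk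
        rwa [inv_inv] at this
      · simp only [MulEquiv.toMonoidHom_eq_coe, MonoidHom.coe_coe, MulAut.conj_apply]
        group
  exact key ⟨x, hx, by simp [MulAut.conj_apply]⟩

lemma mem_normalizer_of_conj_le {R : Subgroup G} {g : G} (h : ∀ x ∈ R, g * x * g⁻¹ ∈ R) :
    g ∈ (Subgroup.normalizer (SetLike.coe R)) := by
  have hle : R.map (MulAut.conj g).toMonoidHom ≤ R := by
    rintro y ⟨z, hz, rfl⟩
    simpa using h z hz
  have hcard : Nat.card (R.map (MulAut.conj g).toMonoidHom) = Nat.card R :=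
    (Nat.card_congr (R.equivMapOfInjective _ (MulAut.conj g).injective).toEquiv).symm
  have heq : R.map (MulAut.conj g).toMonoidHom = R :=
    Subgroup.eq_of_le_of_card_ge hle (le_of_eq hcard.symm)
  rw [Subgroup.mem_normalizer_iff]
  intro y
  constructor
  · exact h y
  · intro hy
    rw [← heq] at hy
    obtain ⟨z, hz, hze⟩ := hy
    simp only [MulEquiv.toMonoidHom_eq_coe, MonoidHom.coe_coe, MulAut.conj_apply] at hze
    have : z = y := by
      have := mul_left_cancel ((mul_right_cancel hze))
      exact this
    rwa [← this]

end Op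

section CentralSplit

variable {G : Type*} [Group G] {p : ℕ}

lemma normal_of_le_center' (Z : Subgroup G) (h : Z ≤ Subgroup.center G) : Z.Normal := by
  constructor
  intro n hn g
  have hc := (Subgroup.mem_center_iff.mp (h hn)) g
  rw [hc, mul_assoc, mul_inv_cancel, mul_one]
  exact hn

lemma pelem_of_mem_pgroup {R : Subgroup G} (hR : IsPGroup p R) {x : G} (hx : x ∈ R) :
    ∃ k, x ^ p ^ k = 1 := by
  obtain ⟨k, hk⟩ := hR ⟨x, hx⟩
  exact ⟨k, by simpa [Subtype.ext_iff] using hk⟩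

lemma mem_of_pelem (hp : p.Prime) {R Z : Subgroup G} (hR : IsPGroup p R)
    (hZc : Z ≤ Subgroup.center G) (hZp : ∀ z ∈ Z, ¬ p ∣ orderOf z)
    {x : G} (hx : x ∈ R ⊔ Z) (hxp : ∃ k, x ^ p ^ k = 1) : x ∈ R := by
  haveI : Z.Normal := normal_of_le_center' Z hZc
  have hxx : x ∈ (↑(R ⊔ Z) : Set G) := hx
  rw [Subgroup.mul_normal] at hxx
  obtain ⟨r, hr, z, hz, rfl⟩ := hxx
  have hcomm : Commute r z := ((Subgroup.mem_center_iff.mp (hZc hz)) r)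
  obtain ⟨k, hk⟩ := hxp
  rw [hcomm.mul_pow] at hk
  have h5 : z ^ p ^ k = (r ^ p ^ k)⁻¹ := by
    rw [mul_eq_one_iff_eq_inv.mp hk, inv_inv]
  have hzR : z ^ p ^ k ∈ R := h5 ▸ R.inv_mem (R.pow_mem hr _)
  have hzpk1 : z ^ p ^ k = 1 := by
    obtain ⟨j, hj⟩ := pelem_of_mem_pgroup hR hzR
    exact eq_one_of_pelem_p'elem hp hj (hZp _ (Z.pow_mem hz _))
  have hz1 : z = 1 := eq_one_of_pelem_p'elem hp hzpk1 (hZp z hz)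
  simpa [hz1] using hr

lemma mem_of_p'elem (hp : p.Prime) {R Z : Subgroup G} (hR : IsPGroup p R)
    (hZc : Z ≤ Subgroup.center G) (hZp : ∀ z ∈ Z, ¬ p ∣ orderOf z)
    {x : G} (hx : x ∈ R ⊔ Z) (hxp : ¬ p ∣ orderOf x) : x ∈ Z := by
  haveI : Z.Normal := normal_of_le_center' Z hZc
  have hxx : x ∈ (↑(R ⊔ Z) : Set G) := hx
  rw [Subgroup.mul_normal] at hxx
  obtain ⟨r, hr, z, hz, rfl⟩ := hxx
  have hcomm : Commute r z := ((Subgroup.mem_center_iff.mp (hZc hz)) r)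
  set n := orderOf (r * z) with hn
  have hpow : (r * z) ^ n = 1 := pow_orderOf_eq_one _
  rw [hcomm.mul_pow] at hpow
  have h5 : r ^ n = (z ^ n)⁻¹ := mul_eq_one_iff_eq_inv.mp hpow
  have hrZ : r ^ n ∈ Z := h5 ▸ Z.inv_mem (Z.pow_mem hz _)
  have hrn1 : r ^ n = 1 := by
    obtain ⟨j, hj⟩ := pelem_of_mem_pgroup hR (R.pow_mem hr n)
    exact eq_one_of_pelem_p'elem hp hj (hZp _ hrZ)
  have hr1 : r = 1 := by
    obtain ⟨k, hk⟩ := pelem_of_mem_pgroup hR hr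
    refine eq_one_of_pelem_p'elem hp hk (fun hcon => hxp ?_)
    exact hcon.trans (orderOf_dvd_of_pow_eq_one hrn1)
  simpa [hr1] using hz

end CentralSplit

section QuotNormalizer

variable {G Q : Type*} [Group G] [Group Q]

lemma map_normalizer_of_surjective {f : G →* Q} (hf : Function.Surjective f)
    {K : Subgroup G} (hker : f.ker ≤ K) :
    (Subgroup.normalizer (SetLike.coe (K.map f))) = (Subgroup.normalizer (SetLike.coe K)).map f := by
  have h1 : ((Subgroup.normalizer (SetLike.coe (K.map f)))).comap f = (Subgroup.normalizer (SetLike.coe K)) := by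
    rw [Subgroup.comap_normalizer_eq_of_surjective _ hf, Subgroup.comap_map_eq,
      sup_of_le_left hker]
  rw [← h1, Subgroup.map_comap_eq_self_of_surjective hf]

end QuotNormalizer

section KeyLemma

variable {G : Type*} [Group G] [Finite G] {p : ℕ}

lemma Op_map_quotient (hp : p.Prime) {N Pstar Z : Subgroup G} [N.Normal]
    (hZc : Z ≤ Subgroup.center G) (hZp : ∀ z ∈ Z, ¬ p ∣ orderOf z)
    (hPp : IsPGroup p Pstar) (hNPZ : N = Pstar ⊔ Z)
    {H : Subgroup G} (hNH : N ≤ H) :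
    Op p (H.map (QuotientGroup.mk' N)) = (Op p H).map (QuotientGroup.mk' N) := by
  haveI : Fact p.Prime := ⟨hp⟩
  set π := QuotientGroup.mk' N with hπ
  have hsurj : Function.Surjective π := QuotientGroup.mk'_surjective N
  have hker : π.ker = N := QuotientGroup.ker_mk' N
  have hZN : Z ≤ N := hNPZ ▸ le_sup_right
  have hPN : Pstar ≤ N := hNPZ ▸ le_sup_left
  -- the easy inclusion
  have heasy : (Op p H).map π ≤ Op p (H.map π) := by
    apply le_Op hp
    · exact Subgroup.map_mono (Op_le H)
    · exact (Op_pgroup hp H).map π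
    · rintro g ⟨g', hg', rfl⟩ x ⟨x', hx', rfl⟩
      exact ⟨g' * x' * g'⁻¹, Op_conj_mem hp H hg' hx', by simp⟩
  refine le_antisymm ?_ heasy
  -- the hard inclusion
  set S := Op p (H.map π) with hS
  set K := S.comap π with hK
  have hNK : N ≤ K := by
    intro x hx
    have hx1 : π x = 1 := by rw [← MonoidHom.mem_ker, hker]; exact hx
    rw [hK, Subgroup.mem_comap, hx1]
    exact S.one_mem
  have hZK : Z ≤ K := hZN.trans hNK
  have hKH : K ≤ H := by
    have := Subgroup.comap_mono (f := π) (Op_le (p := p) (H.map π))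
    rwa [Subgroup.comap_map_eq, hker, sup_of_le_left hNH] at this
  have hmapK : K.map π = S := Subgroup.map_comap_eq_self_of_surjective hsurj S
  have hKcon : ∀ g ∈ H, ∀ x ∈ K, g * x * g⁻¹ ∈ K := by
    intro g hg x hx
    rw [hK, Subgroup.mem_comap] at hx ⊢
    rw [map_mul, map_mul, map_inv]
    exact Op_conj_mem hp (H.map π) ⟨g, hg, rfl⟩ hx
  have hgnorm : ∀ g ∈ H, g ∈ (Subgroup.normalizer (SetLike.coe K)) := fun g hg =>
    mem_normalizer_of_conj_le (fun x hx => hKcon g hg x hx)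
  set T := Op p K with hT
  have hTOpH : T ≤ Op p H :=
    le_Op hp ((Op_le K).trans hKH) (Op_pgroup hp K)
      (fun g hg x hx => Op_conj_of_normalizes hp (hgnorm g hg) hx)
  -- decomposition of elements of K
  have hdecomp : ∀ x ∈ K, ∃ a z : G, x = a * z ∧ z ∈ Z ∧ a ∈ K ∧ (∃ k, a ^ p ^ k = 1) := by
    intro x hx
    obtain ⟨c, d, hxe, hc, hd⟩ := exists_pelem_mul_p'elem hp x
    have hbK : x ^ d ∈ K := K.pow_mem hx d
    have hbN : x ^ d ∈ N := by
      have h1 : π (x ^ d) ∈ S := by rw [hK, Subgroup.mem_comap] at hbK; exact hbK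
      obtain ⟨k, hk⟩ := pelem_of_mem_pgroup (Op_pgroup hp (H.map π)) h1
      have h2 : ¬ p ∣ orderOf (π (x ^ d)) := fun hcon =>
        hd (hcon.trans (orderOf_map_dvd π (x ^ d)))
      have h3 : π (x ^ d) = 1 := eq_one_of_pelem_p'elem hp hk h2
      rw [← hker, MonoidHom.mem_ker]
      exact h3
    have hbZ : x ^ d ∈ Z := mem_of_p'elem hp hPp hZc hZp (hNPZ ▸ hbN) hd
    exact ⟨x ^ c, x ^ d, hxe, hbZ, by rw [hxe] at hx; exact (K.mul_mem_cancel_right hbK).mp hx, hc⟩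
  -- Z as a subgroup of K
  set ZK := Z.subgroupOf K with hZKdef
  haveI hZKn : ZK.Normal := by
    constructor
    intro n hn g
    rw [Subgroup.mem_subgroupOf] at hn ⊢
    have hc := (Subgroup.mem_center_iff.mp (hZc hn)) (g : G)
    have : ((g * n * g⁻¹ : K) : G) = (n : G) := by
      push_cast
      rw [hc, mul_assoc, mul_inv_cancel, mul_one]
    rw [this]
    exact hn
  -- K / ZK is a p-group
  have hquot : IsPGroup p (K ⧸ ZK) := by
    intro q
    obtain ⟨y, rfl⟩ := QuotientGroup.mk_surjective q
    obtain ⟨a, z, hye, hzZ, haK, ⟨k, hak⟩⟩ := hdecomp (y : G) y.2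
    have hzK : z ∈ K := hZK hzZ
    have hy : y = (⟨a, haK⟩ : K) * ⟨z, hzK⟩ := by
      apply Subtype.ext
      exact hye
    refine ⟨k, ?_⟩
    rw [hy]
    have hz1 : ((⟨z, hzK⟩ : K) : K ⧸ ZK) = 1 := by
      rw [QuotientGroup.eq_one_iff]
      rw [Subgroup.mem_subgroupOf]
      exact hzZ
    rw [← QuotientGroup.mk_pow]
    rw [QuotientGroup.eq_one_iff]
    rw [Subgroup.mem_subgroupOf]
    have : ((((⟨a, haK⟩ : K) * ⟨z, hzK⟩) ^ p ^ k : K) : G) = z ^ p ^ k := by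
      push_cast
      have hcomm : Commute (a : G) z := ((Subgroup.mem_center_iff.mp (hZc hzZ)) a)
      rw [hcomm.mul_pow, hak, one_mul]
    rw [this]
    exact Z.pow_mem hzZ _
  -- a Sylow p-subgroup of K generates K together with ZK
  obtain ⟨S₀⟩ : Nonempty (Sylow p K) := inferInstance
  have htop : (S₀ : Subgroup K) ⊔ ZK = ⊤ := by
    rw [← Subgroup.index_eq_one]
    have hidx1 : ¬ p ∣ (S₀ : Subgroup K).index := S₀.not_dvd_index
    have hidx2 : ((S₀ : Subgroup K) ⊔ ZK).index ∣ (S₀ : Subgroup K).index :=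
      Subgroup.index_dvd_of_le le_sup_left
    have hidx3 : ((S₀ : Subgroup K) ⊔ ZK).index ∣ ZK.index :=
      Subgroup.index_dvd_of_le le_sup_right
    obtain ⟨n, hn⟩ := IsPGroup.iff_card.mp hquot
    rw [Subgroup.index_eq_card (H := ZK), hn] at hidx3
    obtain ⟨j, hj, hje⟩ := (Nat.dvd_prime_pow hp).mp hidx3
    rcases Nat.eq_zero_or_pos j with rfl | hj0
    · simpa using hje
    · exact absurd ((hje ▸ dvd_pow_self p hj0.ne').trans hidx2) hidx1
  -- push everything back to G
  have hmapZK : ZK.map K.subtype = Z := by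
    rw [Subgroup.subgroupOf_map_subtype, inf_of_le_left hZK]
  set S₀' := (S₀ : Subgroup K).map K.subtype with hS₀'
  have hKeq : S₀' ⊔ Z = K := by
    have := congrArg (Subgroup.map K.subtype) htop
    rwa [Subgroup.map_sup, hmapZK, ← MonoidHom.range_eq_map, Subgroup.range_subtype] at this
  haveI : Z.Normal := normal_of_le_center' Z hZc
  have hsplit : ∀ k ∈ K, ∃ s ∈ S₀', ∃ z ∈ Z, k = s * z := by
    intro k hk
    have hk' : k ∈ (↑(S₀' ⊔ Z) : Set G) := by rw [hKeq]; exact hk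
    rw [Subgroup.mul_normal] at hk'
    obtain ⟨s, hs, z, hz, rfl⟩ := hk'
    exact ⟨s, hs, z, hz, rfl⟩
  have hS0T : S₀' ≤ T := by
    apply le_Op hp
    · rintro x ⟨y, _, rfl⟩; exact y.2
    · exact S₀.isPGroup'.map _
    · intro k hk x hx
      obtain ⟨s, hs, z, hz, rfl⟩ := hsplit k hk
      have hzc := (Subgroup.mem_center_iff.mp (hZc hz)) x
      have hzx : z * x * z⁻¹ = x := by rw [← hzc, mul_inv_cancel_right]
      have hre : s * z * x * (s * z)⁻¹ = s * (z * x * z⁻¹) * s⁻¹ := by group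
      rw [hre, hzx]
      exact S₀'.mul_mem (S₀'.mul_mem hs hx) (S₀'.inv_mem hs)
  have hKle : K ≤ T ⊔ N := by
    rw [← hKeq]
    exact sup_le (hS0T.trans le_sup_left) (hZN.trans le_sup_right)
  have hKTN : K = T ⊔ N := le_antisymm hKle (sup_le (Op_le K) hNK)
  have hmapN : N.map π = ⊥ := by
    rw [eq_bot_iff]
    rintro x ⟨y, hy, rfl⟩
    have : π y = 1 := by rw [← MonoidHom.mem_ker, hker]; exact hy
    simp [Subgroup.mem_bot, this]
  calc S = K.map π := hmapK.symm
  _ = (T ⊔ N).map π := by rw [← hKTN]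
  _ = T.map π ⊔ N.map π := Subgroup.map_sup _ _ _
  _ = T.map π := by rw [hmapN, sup_bot_eq]
  _ ≤ (Op p H).map π := Subgroup.map_mono hTOpH

end KeyLemma

section MoreLemmas

variable {G : Type*} [Group G] [Finite G] {p : ℕ}

lemma normalizer_sup_eq (hp : p.Prime) {N Pstar Z : Subgroup G} [N.Normal]
    (hZc : Z ≤ Subgroup.center G) (hZp : ∀ z ∈ Z, ¬ p ∣ orderOf z)
    (hPp : IsPGroup p Pstar) (hNPZ : N = Pstar ⊔ Z)
    {R : Subgroup G} (hR : IsPGroup p R) (hPR : Pstar ≤ R) :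
    (Subgroup.normalizer (SetLike.coe (R ⊔ N))) = (Subgroup.normalizer (SetLike.coe R)) := by
  have hRN : R ⊔ N = R ⊔ Z := by rw [hNPZ, ← sup_assoc, sup_of_le_left hPR]
  apply le_antisymm
  · intro g hg
    apply mem_normalizer_of_conj_le
    intro x hx
    have h1 : g * x * g⁻¹ ∈ R ⊔ N :=
      (Subgroup.mem_normalizer_iff.mp hg x).mp ((le_sup_left : R ≤ R ⊔ N) hx)
    rw [hRN] at h1
    obtain ⟨k, hk⟩ := pelem_of_mem_pgroup hR hx
    exact mem_of_pelem hp hR hZc hZp h1 ⟨k, conj_pelem hk⟩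
  · intro g hg
    apply mem_normalizer_of_conj_le
    intro x hx
    have hx' : x ∈ (↑(R ⊔ N) : Set G) := hx
    rw [Subgroup.mul_normal] at hx'
    obtain ⟨r, hr, n, hn, rfl⟩ := hx'
    have hre : g * (r * n) * g⁻¹ = (g * r * g⁻¹) * (g * n * g⁻¹) := by group
    rw [hre]
    exact Subgroup.mul_mem _
      ((le_sup_left : R ≤ R ⊔ N) ((Subgroup.mem_normalizer_iff.mp hg r).mp hr))
      ((le_sup_right : N ≤ R ⊔ N) (‹N.Normal›.conj_mem n hn g))

lemma pstar_le_radical (hp : p.Prime) {Pstar : Subgroup G} (hPnormal : Pstar.Normal)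
    (hPp : IsPGroup p Pstar) {R : Subgroup G} (hrad : R = Op p (Subgroup.normalizer (SetLike.coe R))) : Pstar ≤ R := by
  haveI : Fact p.Prime := ⟨hp⟩
  by_contra hcon
  have hRp : IsPGroup p R := hrad ▸ Op_pgroup hp (Subgroup.normalizer (SetLike.coe R))
  haveI := hPnormal
  set P' := R ⊔ Pstar with hP'
  have hP'p : IsPGroup p P' := IsPGroup.to_sup_of_normal_right hRp hPp
  have hlt : R.subgroupOf P' < ⊤ := by
    rcases lt_or_eq_of_le (le_top : R.subgroupOf P' ≤ ⊤) with h | h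
    · exact h
    · exact absurd (le_sup_right.trans (Subgroup.subgroupOf_eq_top.mp h)) hcon
  haveI : Group.IsNilpotent P' := hP'p.isNilpotent
  have hlt2 := normalizerCondition_of_isNilpotent (G := P') _ hlt
  obtain ⟨x, hx1, hx2⟩ := SetLike.exists_of_lt hlt2
  have hxn : (x : G) ∈ (Subgroup.normalizer (SetLike.coe R)) := by
    apply mem_normalizer_of_conj_le
    intro y hy
    have hyP' : y ∈ P' := (le_sup_left : R ≤ P') hy
    have h3 : (⟨y, hyP'⟩ : P') ∈ R.subgroupOf P' := by rwa [Subgroup.mem_subgroupOf]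
    have h4 := (Subgroup.mem_normalizer_iff.mp hx1 ⟨y, hyP'⟩).mp h3
    rw [Subgroup.mem_subgroupOf] at h4
    simpa using h4
  have hORle : Pstar ⊓ (Subgroup.normalizer (SetLike.coe R)) ≤ R := by
    have h := le_Op hp (inf_le_right : Pstar ⊓ (Subgroup.normalizer (SetLike.coe R)) ≤ (Subgroup.normalizer (SetLike.coe R)))
      (hPp.to_inf_left) ?_
    · rwa [← hrad] at h
    · intro g hg y hy
      exact ⟨hPnormal.conj_mem y hy.1 g,
        Subgroup.mul_mem _ (Subgroup.mul_mem _ hg hy.2) (Subgroup.inv_mem _ hg)⟩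
  have hxP : (x : G) ∈ (↑(R ⊔ Pstar) : Set G) := x.2
  rw [Subgroup.mul_normal] at hxP
  obtain ⟨r, hr, o, ho, hre⟩ := hxP
  have hoNorm : o ∈ (Subgroup.normalizer (SetLike.coe R)) := by
    have : o = r⁻¹ * (x : G) := by rw [← hre]; group
    rw [this]
    exact Subgroup.mul_mem _ (Subgroup.le_normalizer (R.inv_mem hr)) hxn
  have hoR : o ∈ R := hORle ⟨ho, hoNorm⟩
  have hxR : (x : G) ∈ R := by rw [← hre]; exact R.mul_mem hr hoR
  exact hx2 (by rwa [Subgroup.mem_subgroupOf])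

end MoreLemmas


/-- If `N` is a nilpotent normal subgroup of a finite group `G` with `O_{p'}(N) ≤ Z(G)`,
then `R ↦ RN/N` is a bijection from the radical `p`-subgroups of `G` onto the radical
`p`-subgroups of `G/N`. -/
theorem statement_1 {G : Type*} [Group G] [Finite G] {p : ℕ} (hp : p.Prime)
    (N : Subgroup G) [N.Normal] (hnil : Group.IsNilpotent N)
    (hc : (pPrimeCore p N).map N.subtype ≤ Subgroup.center G) :
    Set.BijOn (fun R : Subgroup G => R.map (QuotientGroup.mk' N))
      {R : Subgroup G | IsRadicalPSubgroup p R}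
      {S : Subgroup (G ⧸ N) | IsRadicalPSubgroup p S} := by
  classical
  haveI : Fact p.Prime := ⟨hp⟩
  set π := QuotientGroup.mk' N with hπ
  have hsurj : Function.Surjective π := QuotientGroup.mk'_surjective N
  have hker : π.ker = N := QuotientGroup.ker_mk' N
  set Z : Subgroup G := (pPrimeCore p N).map N.subtype with hZ
  have hZc : Z ≤ Subgroup.center G := hc
  have hZN : Z ≤ N := by rintro x ⟨y, _, rfl⟩; exact y.2
  -- all elements of Z have p'-order
  have hZp : ∀ z ∈ Z, ¬ p ∣ orderOf z := by
    have hKK : ∃ KK : Subgroup N,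
        (KK : Set N) = {x : N | (x : G) ∈ Subgroup.center G ∧ ¬ p ∣ orderOf (x : G)} := by
      refine ⟨{ carrier := setOf (fun x : N => (x : G) ∈ Subgroup.center G ∧ ¬ p ∣ orderOf (x : G))
                one_mem' := ⟨by simpa using (Subgroup.center G).one_mem, by simp [Nat.Prime.not_dvd_one hp]⟩
                mul_mem' := ?_
                inv_mem' := ?_ }, rfl⟩
      · rintro a b ⟨ha1, ha2⟩ ⟨hb1, hb2⟩
        refine ⟨by push_cast; exact Subgroup.mul_mem _ ha1 hb1, ?_⟩
        intro hcon
        have hcomm : Commute (a : G) (b : G) := (Subgroup.mem_center_iff.mp ha1 b).symm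
        have hdvd : orderOf ((a : G) * b) ∣ orderOf (a : G) * orderOf (b : G) :=
          Commute.orderOf_mul_dvd_mul_orderOf hcomm
        push_cast at hcon
        rcases (Nat.Prime.dvd_mul hp).mp (hcon.trans hdvd) with h | h
        · exact ha2 h
        · exact hb2 h
      · rintro a ⟨ha1, ha2⟩
        refine ⟨by push_cast; exact Subgroup.inv_mem _ ha1, ?_⟩
        push_cast
        rwa [orderOf_inv]
    obtain ⟨KK, hKKs⟩ := hKK
    have hle : pPrimeCore p N ≤ KK := by
      apply sSup_le
      rintro H ⟨hHn, hHp⟩ x hx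
      have hx1 : (x : G) ∈ Subgroup.center G := by
        apply hc
        have hHle : H ≤ pPrimeCore p N := le_sSup ⟨hHn, hHp⟩
        exact ⟨x, hHle hx, rfl⟩
      have hx2 : ¬ p ∣ orderOf (x : G) := by
        have horder : orderOf (x : G) = orderOf x := by
          simpa using orderOf_injective N.subtype N.subtype_injective x
        rw [horder]
        intro hcon
        apply hHp
        refine hcon.trans ?_
        have h4 : orderOf (⟨x, hx⟩ : H) ∣ Nat.card H := orderOf_dvd_natCard _
        have h5 : orderOf x = orderOf (⟨x, hx⟩ : H) := by
          simpa using (orderOf_injective H.subtype H.subtype_injective ⟨x, hx⟩).symm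
        rwa [h5]
      have : x ∈ (KK : Set N) := by rw [hKKs]; exact ⟨hx1, hx2⟩
      exact this
    rintro z ⟨y, hy, rfl⟩
    have := hle hy
    rw [← SetLike.mem_coe, hKKs] at this
    exact this.2
  -- Sylow subgroups of N are normal
  have hsylnormal : ∀ (q : ℕ) (_ : Fact q.Prime) (Q : Sylow q N), (Q : Subgroup N).Normal :=
    ((isNilpotent_of_finite_tfae (G := N)).out 0 3).mp hnil
  obtain ⟨P₀⟩ : Nonempty (Sylow p N) := inferInstance
  haveI hP₀n : (P₀ : Subgroup N).Normal := hsylnormal p ⟨hp⟩ P₀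
  set Pstar : Subgroup G := (P₀ : Subgroup N).map N.subtype with hPstar
  have hPp : IsPGroup p Pstar := P₀.isPGroup'.map _
  have hPN : Pstar ≤ N := by rintro x ⟨y, _, rfl⟩; exact y.2
  -- N = P₀ ⊔ O_{p'}(N)
  have htopN : (P₀ : Subgroup N) ⊔ pPrimeCore p N = ⊤ := by
    set J := (P₀ : Subgroup N) ⊔ pPrimeCore p N with hJ
    have hdvd : Nat.card N ∣ Nat.card J := by
      rw [Nat.dvd_iff_prime_pow_dvd_dvd]
      intro q k hq hqk
      have hqn : q.Prime := hq
      haveI : Fact q.Prime := ⟨hqn⟩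
      obtain ⟨Q⟩ : Nonempty (Sylow q N) := inferInstance
      have hQle : (Q : Subgroup N) ≤ J := by
        rcases eq_or_ne q p with rfl | hqp
        · have hQP : Q = P₀ := by
            obtain ⟨g, hg⟩ := MulAction.exists_smul_eq N Q P₀
            calc Q = g⁻¹ • (g • Q) := by rw [smul_smul, inv_mul_cancel, one_smul]
            _ = g⁻¹ • P₀ := by rw [hg]
            _ = P₀ := Sylow.smul_eq_of_normal
          rw [hQP]
          exact le_sup_left
        · refine le_trans (le_sSup ?_) le_sup_right
          refine ⟨hsylnormal q ⟨hqn⟩ Q, ?_⟩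
          rw [Sylow.card_eq_multiplicity]
          intro hcon
          exact hqp ((Nat.prime_dvd_prime_iff_eq hp hqn).mp (hp.dvd_of_dvd_pow hcon)).symm
      refine dvd_trans ?_ (Subgroup.card_dvd_of_le hQle)
      rw [Sylow.card_eq_multiplicity]
      exact pow_dvd_pow q ((Nat.Prime.pow_dvd_iff_le_factorization hqn Nat.card_pos.ne').mp hqk)
    exact Subgroup.eq_top_of_card_eq _
      (Nat.dvd_antisymm (Subgroup.card_subgroup_dvd_card J) hdvd)
  have hNPZ : N = Pstar ⊔ Z := by
    have h := congrArg (Subgroup.map N.subtype) htopN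
    rw [Subgroup.map_sup, ← MonoidHom.range_eq_map, Subgroup.range_subtype] at h
    exact h.symm
  -- Pstar is normal in G
  have hPchar : ∀ x : G, x ∈ Pstar ↔ (x ∈ N ∧ ∃ k, x ^ p ^ k = 1) := fun x =>
    ⟨fun hx => ⟨hPN hx, pelem_of_mem_pgroup hPp hx⟩,
     fun ⟨h1, h2⟩ => mem_of_pelem hp hPp hZc hZp (hNPZ ▸ h1) h2⟩
  have hPnormal : Pstar.Normal := by
    constructor
    intro n hn g
    rw [hPchar] at hn ⊢
    obtain ⟨h1, k, hk⟩ := hn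
    exact ⟨‹N.Normal›.conj_mem n h1 g, k, conj_pelem hk⟩
  -- N normalizes any subgroup containing Pstar
  have hNnorm : ∀ R : Subgroup G, Pstar ≤ R → N ≤ (Subgroup.normalizer (SetLike.coe R)) := by
    intro R hPR
    rw [hNPZ]
    exact sup_le (hPR.trans Subgroup.le_normalizer) (hZc.trans (Subgroup.center_le_normalizer _))
  have hA : ∀ K : Subgroup G, N ≤ K → (Subgroup.normalizer (SetLike.coe (K.map π))) = (Subgroup.normalizer (SetLike.coe K)).map π :=
    fun K hK => map_normalizer_of_surjective hsurj (by rw [hker]; exact hK)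
  have hcomapmap : ∀ R : Subgroup G, (R.map π).comap π = R ⊔ N := fun R => by
    rw [Subgroup.comap_map_eq, hker]
  have hmapN : N.map π = ⊥ := by
    rw [eq_bot_iff]
    rintro x ⟨y, hy, rfl⟩
    have h1 : π y = 1 := by rw [← MonoidHom.mem_ker, hker]; exact hy
    simp [Subgroup.mem_bot, h1]
  refine ⟨?_, ?_, ?_⟩
  · -- MapsTo
    intro R hR
    simp only [Set.mem_setOf_eq] at hR ⊢
    rw [isRadical_iff hp] at hR ⊢
    have hPR : Pstar ≤ R := pstar_le_radical hp hPnormal hPp hR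
    have hRp : IsPGroup p R := hR ▸ Op_pgroup hp (Subgroup.normalizer (SetLike.coe R))
    have hNle : N ≤ (Subgroup.normalizer (SetLike.coe R)) := hNnorm R hPR
    have hmapRN : R.map π = (R ⊔ N).map π := by
      rw [Subgroup.map_sup, hmapN, sup_bot_eq]
    have hnorm1 : (Subgroup.normalizer (SetLike.coe (R.map π))) = (Subgroup.normalizer (SetLike.coe R)).map π := by
      rw [hmapRN, hA (R ⊔ N) le_sup_right,
        normalizer_sup_eq hp hZc hZp hPp hNPZ hRp hPR]
    rw [hnorm1, Op_map_quotient hp hZc hZp hPp hNPZ hNle, ← hR]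
  · -- InjOn
    intro R₁ h1 R₂ h2 heq
    simp only [Set.mem_setOf_eq] at h1 h2
    rw [isRadical_iff hp] at h1 h2
    have hP1 := pstar_le_radical hp hPnormal hPp h1
    have hP2 := pstar_le_radical hp hPnormal hPp h2
    have h1p : IsPGroup p R₁ := h1 ▸ Op_pgroup hp (Subgroup.normalizer (SetLike.coe R₁))
    have h2p : IsPGroup p R₂ := h2 ▸ Op_pgroup hp (Subgroup.normalizer (SetLike.coe R₂))
    simp only at heq
    have hsup : R₁ ⊔ N = R₂ ⊔ N := by rw [← hcomapmap R₁, ← hcomapmap R₂, heq]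
    have key : ∀ A B : Subgroup G, IsPGroup p A → IsPGroup p B → Pstar ≤ A →
        A ⊔ N = B ⊔ N → B ≤ A := by
      intro A B hA hB hPA hAB x hx
      have hx1 : x ∈ A ⊔ Z := by
        have h3 : x ∈ A ⊔ N := by rw [hAB]; exact (le_sup_left : B ≤ B ⊔ N) hx
        rwa [hNPZ, ← sup_assoc, sup_of_le_left hPA] at h3
      exact mem_of_pelem hp hA hZc hZp hx1 (pelem_of_mem_pgroup hB hx)
    exact le_antisymm (key R₂ R₁ h2p h1p hP2 hsup.symm) (key R₁ R₂ h1p h2p hP1 hsup)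
  · -- SurjOn
    intro S hS
    simp only [Set.mem_setOf_eq] at hS
    rw [isRadical_iff hp] at hS
    have hSp : IsPGroup p S := hS ▸ Op_pgroup hp (Subgroup.normalizer (SetLike.coe S))
    set K := S.comap π with hKdef
    have hNK : N ≤ K := by
      intro x hx
      have hx1 : π x = 1 := by rw [← MonoidHom.mem_ker, hker]; exact hx
      rw [hKdef, Subgroup.mem_comap, hx1]
      exact S.one_mem
    have hmapK : K.map π = S := Subgroup.map_comap_eq_self_of_surjective hsurj S
    set R := Op p K with hRdef
    have hPK : Pstar ≤ K := hPN.trans hNK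
    have hPR : Pstar ≤ R := le_Op hp hPK hPp (fun g _ x hx => hPnormal.conj_mem x hx g)
    have hRp : IsPGroup p R := Op_pgroup hp K
    have hmapR : R.map π = S := by
      have hD := Op_map_quotient hp hZc hZp hPp hNPZ hNK (H := K)
      rw [hmapK] at hD
      calc R.map π = Op p S := hD.symm
      _ = S := Op_self hp hSp
    have hKRN : K = R ⊔ N := by rw [← hcomapmap R, hmapR]
    have hRle : R ≤ K := Op_le K
    have hnormKR : (Subgroup.normalizer (SetLike.coe K)) = (Subgroup.normalizer (SetLike.coe R)) := by
      rw [hKRN]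
      exact normalizer_sup_eq hp hZc hZp hPp hNPZ hRp hPR
    have hNleR : N ≤ (Subgroup.normalizer (SetLike.coe R)) := hNnorm R hPR
    have hKH : K ≤ (Subgroup.normalizer (SetLike.coe R)) := by rw [← hnormKR]; exact Subgroup.le_normalizer
    have hmapH : (Subgroup.normalizer (SetLike.coe R)).map π = (Subgroup.normalizer (SetLike.coe S)) := by
      rw [← hnormKR, ← hA K hNK, hmapK]
    have hOpH : Op p (Subgroup.normalizer (SetLike.coe R)) = R := by
      have hD := Op_map_quotient hp hZc hZp hPp hNPZ hNleR (H := (Subgroup.normalizer (SetLike.coe R)))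
      rw [hmapH, ← hS] at hD
      apply le_antisymm
      · have hle1 : Op p (Subgroup.normalizer (SetLike.coe R)) ≤ K := by
          intro x hx
          rw [hKdef, Subgroup.mem_comap]
          have h5 : π x ∈ (Op p (Subgroup.normalizer (SetLike.coe R))).map π := ⟨x, hx, rfl⟩
          rwa [← hD] at h5
        intro x hx
        have hxK : x ∈ R ⊔ Z := by
          have h6 := hle1 hx
          rwa [hKRN, hNPZ, ← sup_assoc, sup_of_le_left hPR] at h6
        exact mem_of_pelem hp hRp hZc hZp hxK
          (pelem_of_mem_pgroup (Op_pgroup hp (Subgroup.normalizer (SetLike.coe R))) hx)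
      · apply le_Op hp (hRle.trans hKH) hRp
        intro g hg x hx
        have hgK : g ∈ (Subgroup.normalizer (SetLike.coe K)) := by rw [hnormKR]; exact hg
        exact Op_conj_of_normalizes hp hgK hx
    refine ⟨R, ?_, hmapR⟩
    simp only [Set.mem_setOf_eq]
    rw [isRadical_iff hp]
    exact hOpH.symm
end

section
/- Let p be a prime and let R be a radical p-subgroup of a finite group G. If A is a subgroup of the center Z(R) such that A is stable under conjugation by every element of N_G(R), then R is a radical p-subgroup of N_G(A) and also a radical p-subgroup of the centralizer Z_G(A). -/
namespace RadAux

variable {G : Type*} [Group G] {p : ℕ}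

/-- `G`-level version of the `p`-core of a subgroup `M`. -/
def GOp (p : ℕ) {G : Type*} [Group G] (M : Subgroup G) : Subgroup G :=
  sSup {S : Subgroup G | S ≤ M ∧ IsPGroup p S ∧ M ≤ (Subgroup.normalizer (S : Set G))}

lemma GOp_le {M : Subgroup G} : GOp p M ≤ M := sSup_le fun _ h => h.1

lemma le_GOp {M S : Subgroup G} (h1 : S ≤ M) (h2 : IsPGroup p S)
    (h3 : M ≤ (Subgroup.normalizer (S : Set G))) : S ≤ GOp p M := le_sSup ⟨h1, h2, h3⟩

lemma mem_normalizer_of_conj {S : Subgroup G} {g : G}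
    (h1 : ∀ s ∈ S, g * s * g⁻¹ ∈ S) (h2 : ∀ s ∈ S, g⁻¹ * s * g ∈ S) :
    g ∈ (Subgroup.normalizer (S : Set G)) := by
  rw [Subgroup.mem_normalizer_iff]
  intro h
  refine ⟨fun hh => h1 h hh, fun hh => ?_⟩
  have := h2 _ hh
  rwa [show g⁻¹ * (g * h * g⁻¹) * g = h by group] at this

lemma le_normalizer_of_conj {N S : Subgroup G}
    (h : ∀ g ∈ N, ∀ s ∈ S, g * s * g⁻¹ ∈ S) : N ≤ (Subgroup.normalizer (S : Set G)) := fun g hg =>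
  mem_normalizer_of_conj (h g hg) (by simpa using h g⁻¹ (inv_mem hg))

lemma map_conj_eq_iff {S : Subgroup G} {g : G} :
    S.map (MulAut.conj g).toMonoidHom = S ↔ g ∈ (Subgroup.normalizer (S : Set G)) := by
  constructor
  · intro h
    rw [Subgroup.mem_normalizer_iff'']
    intro x
    nth_rewrite 1 [← h]
    rw [Subgroup.mem_map_equiv, MulAut.conj_symm_apply]
  · intro hg
    ext x
    rw [Subgroup.mem_map_equiv, MulAut.conj_symm_apply]
    exact (Subgroup.mem_normalizer_iff''.1 hg x).symm

lemma pCore'_eq_GOp_top (p : ℕ) (G : Type*) [Group G] :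
    pCore' p G = GOp p (⊤ : Subgroup G) := by
  unfold pCore' GOp
  congr 1
  ext S
  simp only [Set.mem_setOf_eq, le_top, true_and]
  rw [top_le_iff, Subgroup.normalizer_eq_top_iff]
  tauto

lemma GOp_isPGroup [Finite G] (M : Subgroup G) : IsPGroup p (GOp p M) := by
  have : Finite (Subgroup G) :=
    Finite.of_injective (fun S : Subgroup G => (S : Set G)) SetLike.coe_injective
  set 𝒮 : Set (Subgroup G) := {S | S ≤ M ∧ IsPGroup p S ∧ M ≤ (Subgroup.normalizer (S : Set G))} with h𝒮
  suffices h : sSup 𝒮 ∈ 𝒮 from h.2.1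
  have hfin : 𝒮.Finite := Set.toFinite _
  have hbot : (⊥ : Subgroup G) ∈ 𝒮 := by
    refine ⟨bot_le, IsPGroup.of_bot, ?_⟩
    rw [Subgroup.normalizer_eq_top_iff.2 inferInstance]
    exact le_top
  have hsup : ∀ S₁ ∈ 𝒮, ∀ S₂ ∈ 𝒮, S₁ ⊔ S₂ ∈ 𝒮 := by
    rintro S₁ ⟨h11, h12, h13⟩ S₂ ⟨h21, h22, h23⟩
    refine ⟨sup_le h11 h21, IsPGroup.to_sup_of_normal_right' h12 h22 (h11.trans h23), ?_⟩
    intro g hg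
    rw [← map_conj_eq_iff, Subgroup.map_sup,
      map_conj_eq_iff.2 (h13 hg), map_conj_eq_iff.2 (h23 hg)]
  have key : ∀ T : Set (Subgroup G), T.Finite → T ⊆ 𝒮 → sSup T ∈ 𝒮 := by
    intro T hT
    refine Set.Finite.induction_on T hT ?_ ?_
    · intro _
      rw [sSup_empty]
      exact hbot
    · intro a s _ _ ih hins
      rw [sSup_insert]
      exact hsup a (hins (Set.mem_insert a s)) (sSup s)
        (ih fun x hx => hins (Set.mem_insert_of_mem a hx))
  exact key 𝒮 hfin le_rfl

lemma GOp_conj_le (φ : G ≃* G) (M : Subgroup G) :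
    (GOp p M).map φ.toMonoidHom ≤ GOp p (M.map φ.toMonoidHom) := by
  rw [GOp, (Subgroup.gc_map_comap φ.toMonoidHom).l_sSup]
  refine iSup_le fun S => iSup_le fun hS => ?_
  exact le_GOp (Subgroup.map_mono hS.1) (hS.2.1.map _)
    ((Subgroup.map_mono hS.2.2).trans (Subgroup.le_normalizer_map _))

lemma normalizer_subgroupOf {R H : Subgroup G} (hRH : R ≤ H) :
    (Subgroup.normalizer ((R.subgroupOf H : Subgroup H) : Set H)) = (Subgroup.normalizer (R : Set G)).subgroupOf H := by
  ext x
  rw [Subgroup.mem_subgroupOf, Subgroup.mem_normalizer_iff, Subgroup.mem_normalizer_iff]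
  constructor
  · intro h y
    constructor
    · intro hy
      have := (h ⟨y, hRH hy⟩).1 (by simpa [Subgroup.mem_subgroupOf] using hy)
      simpa [Subgroup.mem_subgroupOf] using this
    · intro hy
      have hyH : y ∈ H := by
        have h1 : (x : G) * y * (x : G)⁻¹ ∈ H := hRH hy
        have h2 := mul_mem (mul_mem (inv_mem x.2) h1) x.2
        rwa [show (x : G)⁻¹ * ((x : G) * y * (x : G)⁻¹) * (x : G) = y by group] at h2
      have := (h ⟨y, hyH⟩).2 (by simpa [Subgroup.mem_subgroupOf] using hy)
      simpa [Subgroup.mem_subgroupOf] using this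
  · intro h y
    simp only [Subgroup.mem_subgroupOf]
    simpa using h (y : G)

lemma map_subtype_GOp (H : Subgroup G) (X : Subgroup H) :
    (GOp p X).map H.subtype = GOp p (X.map H.subtype) := by
  apply le_antisymm
  · rw [GOp, (Subgroup.gc_map_comap H.subtype).l_sSup]
    refine iSup_le fun S => iSup_le fun hS => ?_
    refine le_GOp (Subgroup.map_mono hS.1) (hS.2.1.map _) ?_
    intro g hg
    rcases Subgroup.mem_map.1 hg with ⟨x, hx, rfl⟩
    have hx' : x ∈ (Subgroup.normalizer ((S.map H.subtype : Subgroup G) : Set G)).subgroupOf H := by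
      rw [← normalizer_subgroupOf (Subgroup.map_subtype_le S), Subgroup.subgroupOf,
        Subgroup.comap_map_eq_self_of_injective H.subtype_injective S]
      exact hS.2.2 hx
    exact hx'
  · refine sSup_le ?_
    rintro S ⟨h1, h2, h3⟩
    have hSH : S ≤ H := h1.trans (Subgroup.map_subtype_le X)
    have hS' : (S.subgroupOf H).map H.subtype = S := by
      rw [Subgroup.subgroupOf_map_subtype, inf_eq_left.2 hSH]
    rw [← hS']
    apply Subgroup.map_mono
    refine le_GOp ?_ h2.comap_subtype ?_
    · rw [Subgroup.subgroupOf,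
        ← Subgroup.comap_map_eq_self_of_injective H.subtype_injective X]
      exact Subgroup.comap_mono h1
    · rw [normalizer_subgroupOf hSH]
      intro x hx
      rw [Subgroup.mem_subgroupOf]
      exact h3 (Subgroup.mem_map_of_mem _ hx)

lemma isRadical_iff {K : Type*} [Group K] {Q : Subgroup K} :
    IsRadicalPSubgroup p Q ↔ Q = GOp p (Subgroup.normalizer (Q : Set K)) := by
  rw [IsRadicalPSubgroup, pCore'_eq_GOp_top,
    ← (Subgroup.map_injective (Subgroup.normalizer (Q : Set K)).subtype_injective).eq_iff,
    map_subtype_GOp, Subgroup.subgroupOf_map_subtype,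
    inf_eq_left.2 Subgroup.le_normalizer, ← MonoidHom.range_eq_map,
    Subgroup.range_subtype]

lemma isRadical_subgroupOf_iff {R H : Subgroup G} (hRH : R ≤ H) :
    IsRadicalPSubgroup p (R.subgroupOf H) ↔ R = GOp p ((Subgroup.normalizer (R : Set G)) ⊓ H) := by
  rw [isRadical_iff, normalizer_subgroupOf hRH,
    ← (Subgroup.map_injective H.subtype_injective).eq_iff,
    map_subtype_GOp, Subgroup.subgroupOf_map_subtype, Subgroup.subgroupOf_map_subtype,
    inf_eq_left.2 hRH]

end RadAux

open RadAux in
/-- Let `R` be a radical `p`-subgroup of a finite group `G`, and let `A` be a subgroup of the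
center `Z(R) = R ⊓ C_G(R)` which is stable under conjugation by every element of `N_G(R)`
(i.e. `N_G(R) ≤ N_G(A)`).  Then `R` is a radical `p`-subgroup of `N_G(A)` and of `C_G(A)`. -/
theorem statement_2 {G : Type*} [Group G] [Finite G] {p : ℕ} (hp : p.Prime)
    (R A : Subgroup G) (hR : IsRadicalPSubgroup p R)
    (hA : A ≤ R ⊓ Subgroup.centralizer (R : Set G))
    (hstab : Subgroup.normalizer (R : Set G) ≤ Subgroup.normalizer (A : Set G)) :
    IsRadicalPSubgroup p (R.subgroupOf (Subgroup.normalizer (A : Set G))) ∧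
      IsRadicalPSubgroup p (R.subgroupOf (Subgroup.centralizer (A : Set G))) := by
  have hRC : R ≤ Subgroup.centralizer (A : Set G) :=
    Subgroup.le_centralizer_iff.2 (hA.trans inf_le_right)
  have hCN : Subgroup.centralizer (A : Set G) ≤ (Subgroup.normalizer (A : Set G)) := by
    intro g hg
    rw [Subgroup.mem_normalizer_iff]
    intro a
    constructor
    · intro ha
      have h1 := hg a ha
      have h2 : g * a * g⁻¹ = a := by rw [← h1]; group
      rwa [h2]
    · intro ha
      have h2 := hg _ ha
      have h3 : g * a = g * (g * a * g⁻¹) := by rw [← h2]; group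
      rw [show a = g * a * g⁻¹ from mul_left_cancel h3]
      exact ha
  have hRH₁ : R ≤ (Subgroup.normalizer (A : Set G)) := hRC.trans hCN
  have hRrad : R = GOp p (Subgroup.normalizer (R : Set G)) := isRadical_iff.1 hR
  have hRp : IsPGroup p R := by rw [hRrad]; exact GOp_isPGroup _
  constructor
  · rw [isRadical_subgroupOf_iff hRH₁, inf_eq_left.2 hstab]
    exact hRrad
  · rw [isRadical_subgroupOf_iff hRC]
    set C := Subgroup.centralizer (A : Set G) with hC
    set M := (Subgroup.normalizer (R : Set G)) ⊓ C with hM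
    have hCnorm : (Subgroup.normalizer (A : Set G)) ≤ (Subgroup.normalizer (C : Set G)) := by
      apply le_normalizer_of_conj
      intro g hg c hc
      rw [hC, Subgroup.mem_centralizer_iff]
      intro a ha
      have haA : g⁻¹ * a * g ∈ A := (Subgroup.mem_normalizer_iff''.1 hg a).1 ha
      have hcomm := Subgroup.mem_centralizer_iff.1 hc _ haA
      have h5 : a * (g * c * g⁻¹) = g * ((g⁻¹ * a * g) * c) * g⁻¹ := by group
      rw [h5, hcomm]
      group
    have hconj : ∀ g ∈ (Subgroup.normalizer (R : Set G)), M.map (MulAut.conj g).toMonoidHom = M := by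
      intro g hg
      rw [hM, Subgroup.map_inf _ _ _ (MulAut.conj g).injective,
        map_conj_eq_iff.2 (Subgroup.le_normalizer hg),
        map_conj_eq_iff.2 (hCnorm (hstab hg))]
    apply le_antisymm
    · exact le_GOp (le_inf Subgroup.le_normalizer hRC) hRp inf_le_left
    · set Q := GOp p M with hQdef
      have hQle : Q ≤ M := GOp_le
      have hQp : IsPGroup p Q := GOp_isPGroup _
      have hQN : Q ≤ (Subgroup.normalizer (R : Set G)) := hQle.trans inf_le_left
      have hsup : Q ⊔ R ≤ GOp p (Subgroup.normalizer (R : Set G)) := by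
        refine le_GOp (sup_le hQN Subgroup.le_normalizer)
          (IsPGroup.to_sup_of_normal_right' hQp hRp hQN) ?_
        apply le_normalizer_of_conj
        intro g hg s hs
        have hmap : (Q ⊔ R).map (MulAut.conj g).toMonoidHom ≤ Q ⊔ R := by
          rw [Subgroup.map_sup]
          apply sup_le
          · refine le_trans ?_ (le_sup_left : Q ≤ Q ⊔ R)
            have := GOp_conj_le (p := p) (MulAut.conj g) M
            rwa [hconj g hg] at this
          · rw [map_conj_eq_iff.2 hg]
            exact le_sup_right
        have h6 : (MulAut.conj g).toMonoidHom s ∈ (Q ⊔ R).map (MulAut.conj g).toMonoidHom :=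
          Subgroup.mem_map_of_mem _ hs
        have h7 := hmap h6
        simpa [MulAut.conj_apply] using h7
      calc Q ≤ Q ⊔ R := le_sup_left
        _ ≤ GOp p (Subgroup.normalizer (R : Set G)) := hsup
        _ = R := hRrad.symm
end

section
/- Let p be a prime and let R be a radical p-subgroup of a finite group G. Let H be a subgroup of G which contains R and is normalized by N_G(R). Then R is a radical p-subgroup of H. -/
/-- In a finite group, `O_p(G)` is a normal `p`-subgroup. -/
lemma pCore'_spec (p : ℕ) (G : Type*) [Group G] [Finite G] :
    (pCore' p G).Normal ∧ IsPGroup p (pCore' p G) := by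
  classical
  haveI : Finite (Subgroup G) :=
    Finite.of_injective (fun K : Subgroup G => (K : Set G)) SetLike.coe_injective
  set S : Set (Subgroup G) := {K : Subgroup G | K.Normal ∧ IsPGroup p K} with hSdef
  have hbot : (⊥ : Subgroup G) ∈ S := ⟨inferInstance, IsPGroup.of_bot⟩
  have hfin : S.Finite := Set.toFinite S
  have hne : hfin.toFinset.Nonempty := ⟨⊥, hfin.mem_toFinset.mpr hbot⟩
  have hmem : sSup S ∈ S := by
    have h1 : sSup S = hfin.toFinset.sup' hne id := by
      rw [Finset.sup'_eq_sup, Finset.sup_id_eq_sSup, hfin.coe_toFinset]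
    rw [h1]
    refine Finset.sup'_mem S ?_ _ hne id (fun K hK => hfin.mem_toFinset.mp hK)
    intro x hx y hy
    haveI := hx.1
    haveI := hy.1
    exact ⟨inferInstance, hx.2.to_sup_of_normal_right hy.2⟩
  exact hmem

lemma pCore'_map_le {p : ℕ} {G₁ G₂ : Type*} [Group G₁] [Group G₂] (e : G₁ ≃* G₂) :
    (pCore' p G₁).map e.toMonoidHom ≤ pCore' p G₂ := by
  rw [pCore', Subgroup.map_le_iff_le_comap]
  refine sSup_le fun K hK => ?_
  rw [← Subgroup.map_le_iff_le_comap]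
  exact le_sSup ⟨hK.1.map _ e.surjective, hK.2.map _⟩

lemma pCore'_map_equiv {p : ℕ} {G₁ G₂ : Type*} [Group G₁] [Group G₂] (e : G₁ ≃* G₂) :
    (pCore' p G₁).map e.toMonoidHom = pCore' p G₂ := by
  refine le_antisymm (pCore'_map_le e) fun x hx => ?_
  have h1 : e.symm x ∈ pCore' p G₁ := by
    have := pCore'_map_le (p := p) e.symm
    exact this ⟨x, hx, rfl⟩
  exact ⟨e.symm x, h1, e.apply_symm_apply x⟩

lemma pCore'_eq_of {p : ℕ} {G : Type*} [Group G] {R₀ : Subgroup G}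
    (h1 : R₀.Normal) (h2 : IsPGroup p R₀)
    (h3 : ∀ K : Subgroup G, K.Normal → IsPGroup p K → K ≤ R₀) :
    pCore' p G = R₀ :=
  le_antisymm (sSup_le fun K hK => h3 K hK.1 hK.2) (le_sSup ⟨h1, h2⟩)

/-- Let `R` be a radical `p`-subgroup of a finite group `G`, and let `H` be a subgroup of `G`
containing `R` and normalized by `N_G(R)`.  Then `R` is a radical `p`-subgroup of `H`. -/
theorem statement_3 {G : Type*} [Group G] [Finite G] {p : ℕ} (hp : p.Prime)
    (R H : Subgroup G) (hR : IsRadicalPSubgroup p R)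
    (hRH : R ≤ H) (hnorm : Subgroup.normalizer (R : Set G) ≤ Subgroup.normalizer (H : Set G)) :
    IsRadicalPSubgroup p (R.subgroupOf H) := by
  classical
  rw [IsRadicalPSubgroup] at hR ⊢
  -- R is a p-group
  have hRp : IsPGroup p R := by
    have h0 : IsPGroup p (R.subgroupOf (Subgroup.normalizer (R : Set G))) :=
      hR ▸ (pCore'_spec p (Subgroup.normalizer (R : Set G))).2
    exact h0.of_equiv (Subgroup.subgroupOfEquivOfLe Subgroup.le_normalizer)
  -- identify the normalizer of R.subgroupOf H in H
  have hnormEq : (Subgroup.normalizer ((R.subgroupOf H : Subgroup ↥H) : Set ↥H)) = (Subgroup.normalizer (R : Set G)).subgroupOf H := by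
    ext x
    rw [Subgroup.mem_normalizer_iff, Subgroup.mem_subgroupOf,
      Subgroup.mem_normalizer_iff]
    constructor
    · intro hx g
      by_cases hg : g ∈ H
      · have := hx ⟨g, hg⟩
        simpa [Subgroup.mem_subgroupOf] using this
      · constructor
        · intro hgR; exact absurd (hRH hgR) hg
        · intro hgR
          have : (x : G) * g * (x : G)⁻¹ ∈ H := hRH hgR
          have hg' : g = (x : G)⁻¹ * ((x : G) * g * (x : G)⁻¹) * (x : G) := by
            group
          rw [hg'] at hg
          exact absurd (H.mul_mem (H.mul_mem (H.inv_mem x.2) this) x.2) hg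
    · intro hx h
      simp only [Subgroup.mem_subgroupOf]
      exact_mod_cast hx (h : G)
  have hnrm : ((R.subgroupOf H).subgroupOf (Subgroup.normalizer ((R.subgroupOf H : Subgroup ↥H) : Set ↥H))).Normal :=
    Subgroup.normal_in_normalizer
  rw [hnormEq] at hnrm ⊢
  symm
  refine pCore'_eq_of hnrm ?_ ?_
  · -- p-group
    exact (hRp.comap_of_injective H.subtype Subtype.coe_injective).comap_of_injective
      ((Subgroup.normalizer (R : Set G)).subgroupOf H).subtype Subtype.coe_injective
  · -- maximality
    set M : Subgroup ↥H := (Subgroup.normalizer (R : Set G)).subgroupOf H with hMdef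
    set f : ↥M →* G := H.subtype.comp M.subtype with hfdef
    set M' : Subgroup G := (Subgroup.normalizer (R : Set G)) ⊓ H with hM'def
    set M'' : Subgroup ↥(Subgroup.normalizer (R : Set G)) := M'.subgroupOf (Subgroup.normalizer (R : Set G)) with hM''def
    haveI hM''norm : M''.Normal := by
      constructor
      intro x hx n
      have hx' : (x : G) ∈ M' := hx
      refine Subgroup.mem_subgroupOf.mpr ?_
      have hcoe : ((n * x * n⁻¹ : ↥(Subgroup.normalizer (R : Set G))) : G) = (n : G) * (x : G) * (n : G)⁻¹ := by
        push_cast; ring_nf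
      rw [hcoe]
      constructor
      · exact (Subgroup.normalizer (R : Set G)).mul_mem ((Subgroup.normalizer (R : Set G)).mul_mem n.2 hx'.1) ((Subgroup.normalizer (R : Set G)).inv_mem n.2)
      · exact (Subgroup.mem_normalizer_iff.mp (hnorm n.2) (x : G)).mp hx'.2
    intro K hKn hKp
    have hfapp : ∀ k : ↥M, f k = ((k : ↥H) : G) := fun k => rfl
    have hK₀p : IsPGroup p (K.map f) := hKp.map f
    have hK₀le : K.map f ≤ M' := by
      rintro _ ⟨k, _, rfl⟩
      exact ⟨(Subgroup.mem_subgroupOf.mp k.2), ((k : ↥M) : ↥H).2⟩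
    -- K.map f is normalized by M'
    have hconj : ∀ g ∈ M', ∀ y ∈ K.map f, g * y * g⁻¹ ∈ K.map f := by
      intro g hg y hy
      obtain ⟨k, hk, rfl⟩ := hy
      have hgH : g ∈ H := hg.2
      have hgM : (⟨g, hgH⟩ : ↥H) ∈ M := Subgroup.mem_subgroupOf.mpr hg.1
      refine ⟨(⟨⟨g, hgH⟩, hgM⟩ : ↥M) * k * (⟨⟨g, hgH⟩, hgM⟩ : ↥M)⁻¹,
        hKn.conj_mem k hk _, ?_⟩
      simp [hfapp]
    have hK₂p : IsPGroup p (((K.map f).subgroupOf (Subgroup.normalizer (R : Set G))).subgroupOf M'') := by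
      exact (hK₀p.comap_of_injective (Subgroup.normalizer (R : Set G)).subtype Subtype.coe_injective).comap_of_injective
        M''.subtype Subtype.coe_injective
    have hK₂mem : ∀ x : ↥M'',
        x ∈ ((K.map f).subgroupOf (Subgroup.normalizer (R : Set G))).subgroupOf M'' ↔
          (((x : ↥(Subgroup.normalizer (R : Set G))) : G)) ∈ K.map f := by
      intro x
      rw [Subgroup.mem_subgroupOf, Subgroup.mem_subgroupOf]
    have hK₂norm : (((K.map f).subgroupOf (Subgroup.normalizer (R : Set G))).subgroupOf M'').Normal := by
      constructor
      intro x hx m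
      rw [hK₂mem] at hx ⊢
      have hcoe : (((m * x * m⁻¹ : ↥M'') : ↥(Subgroup.normalizer (R : Set G))) : G)
          = (((m : ↥(Subgroup.normalizer (R : Set G))) : G)) * (((x : ↥(Subgroup.normalizer (R : Set G))) : G))
            * (((m : ↥(Subgroup.normalizer (R : Set G))) : G))⁻¹ := by
        push_cast; ring_nf
      rw [hcoe]
      exact hconj _ (Subgroup.mem_subgroupOf.mp m.2) _ hx
    have hK₂le : ((K.map f).subgroupOf (Subgroup.normalizer (R : Set G))).subgroupOf M'' ≤ pCore' p ↥M'' :=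
      le_sSup ⟨hK₂norm, hK₂p⟩
    have hP := pCore'_spec p ↥M''
    have hQp : IsPGroup p ((pCore' p ↥M'').map M''.subtype) := hP.2.map _
    have hQnorm : ((pCore' p ↥M'').map M''.subtype).Normal := by
      constructor
      rintro _ ⟨y, hy, rfl⟩ n
      have h1 : (MulAut.conjNormal n) y ∈ pCore' p ↥M'' := by
        have h2 : (MulAut.conjNormal n) y
            ∈ (pCore' p ↥M'').map (MulAut.conjNormal n).toMonoidHom :=
          Subgroup.mem_map_of_mem _ hy
        rwa [pCore'_map_equiv (MulAut.conjNormal n)] at h2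
      exact ⟨(MulAut.conjNormal n) y, h1, (MulAut.conjNormal_apply n y).symm⟩
    have hQle : (pCore' p ↥M'').map M''.subtype ≤ R.subgroupOf (Subgroup.normalizer (R : Set G)) := by
      rw [hR]
      exact le_sSup ⟨hQnorm, hQp⟩
    -- chase elements
    intro k hk
    refine Subgroup.mem_subgroupOf.mpr (Subgroup.mem_subgroupOf.mpr ?_)
    have h1 : f k ∈ K.map f := Subgroup.mem_map_of_mem f hk
    have h2 : f k ∈ M' := hK₀le h1
    have h3 : (⟨f k, h2.1⟩ : ↥(Subgroup.normalizer (R : Set G))) ∈ M'' := Subgroup.mem_subgroupOf.mpr h2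
    have h4 : (⟨⟨f k, h2.1⟩, h3⟩ : ↥M'') ∈ ((K.map f).subgroupOf (Subgroup.normalizer (R : Set G))).subgroupOf M'' :=
      (hK₂mem _).mpr h1
    have h5 : (⟨⟨f k, h2.1⟩, h3⟩ : ↥M'') ∈ pCore' p ↥M'' := hK₂le h4
    have h6 : (⟨f k, h2.1⟩ : ↥(Subgroup.normalizer (R : Set G))) ∈ (pCore' p ↥M'').map M''.subtype := ⟨_, h5, rfl⟩
    have h7 := hQle h6
    rw [Subgroup.mem_subgroupOf] at h7
    exact h7
end

section
/- Let p be a prime, let R be a radical p-subgroup of a finite group G, and put D = Z_G(R). Then R is a radical p-subgroup of the centralizer Z_G(D). -/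
lemma normal_conj_map {X : Type*} [Group X] {H : Subgroup X} (hH : H.Normal) (g : X) :
    H.map (MulAut.conj g).toMonoidHom = H := by
  ext x
  simp only [Subgroup.mem_map, MulEquiv.coe_toMonoidHom, MulAut.conj_apply]
  constructor
  · rintro ⟨y, hy, rfl⟩; exact hH.conj_mem y hy g
  · intro hx
    refine ⟨g⁻¹ * x * g, ?_, by group⟩
    simpa using hH.conj_mem x hx g⁻¹

lemma sSup_normal {X : Type*} [Group X] {S : Set (Subgroup X)}
    (h : ∀ H ∈ S, H.Normal) : (sSup S).Normal := by
  constructor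
  intro n hn g
  have hmap : (sSup S).map (MulAut.conj g).toMonoidHom = sSup S := by
    rw [(Subgroup.gc_map_comap _).l_sSup]
    rw [sSup_eq_iSup]
    exact iSup_congr fun H => by
      by_cases hH : H ∈ S
      · simp only [hH, iSup_pos]; exact normal_conj_map (h H hH) g
      · simp [hH]
  rw [← hmap]
  exact ⟨n, hn, rfl⟩

lemma pCore'_normal_s4 (p : ℕ) (X : Type*) [Group X] : (pCore' p X).Normal :=
  sSup_normal fun _ h => h.1

lemma isPGroup_sSup {p : ℕ} {X : Type*} [Group X] :
    ∀ (S : Set (Subgroup X)), S.Finite → (∀ H ∈ S, H.Normal ∧ IsPGroup p H) →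
    IsPGroup p (sSup S : Subgroup X) := by
  intro S hfin
  refine Set.Finite.induction_on (motive := fun (T : Set (Subgroup X)) _ => (∀ H ∈ T, H.Normal ∧ IsPGroup p H) →
      IsPGroup p (sSup T : Subgroup X)) S hfin
    (fun _ => by rw [sSup_empty]; exact IsPGroup.of_bot) ?_
  intro a s _ _ ih h
  rw [sSup_insert]
  have hN : (sSup s).Normal := sSup_normal fun H hH => (h H (Set.mem_insert_of_mem _ hH)).1
  exact IsPGroup.to_sup_of_normal_right (h a (Set.mem_insert _ _)).2
    (ih fun H hH => h H (Set.mem_insert_of_mem _ hH))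

lemma pCore'_isPGroup (p : ℕ) (X : Type*) [Group X] [Finite X] : IsPGroup p (pCore' p X) :=
  isPGroup_sSup _ (Set.toFinite _) fun _ h => h

lemma le_pCore'_s4 {p : ℕ} {X : Type*} [Group X] {H : Subgroup X} (hn : H.Normal)
    (hp : IsPGroup p H) : H ≤ pCore' p X :=
  le_sSup ⟨hn, hp⟩

/-- Let `R` be a radical `p`-subgroup of a finite group `G` and put `D = Z_G(R)`.
Then `R` is a radical `p`-subgroup of `Z_G(D)`. -/
theorem statement_4 {G : Type*} [Group G] [Finite G] {p : ℕ} (hp : p.Prime)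
    (R : Subgroup G) (hR : IsRadicalPSubgroup p R) :
    IsRadicalPSubgroup p
      (R.subgroupOf (Subgroup.centralizer ((Subgroup.centralizer (R : Set G) : Subgroup G) : Set G))) := by
  rw [IsRadicalPSubgroup] at hR ⊢
  set D : Subgroup G := Subgroup.centralizer (R : Set G) with hD
  set C : Subgroup G := Subgroup.centralizer (D : Set G) with hC
  -- `R ≤ C`
  have hRC : R ≤ C := by
    intro r hr
    rw [hC, Subgroup.mem_centralizer_iff]
    intro d hd
    exact (Subgroup.mem_centralizer_iff.mp hd r hr).symm
  -- conjugation by elements of `N_G(R)` preserves `D` and `C`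
  have hDconj : ∀ n ∈ (Subgroup.normalizer (R : Set G)), ∀ d ∈ D, n * d * n⁻¹ ∈ D := by
    intro n hn d hd
    rw [hD, Subgroup.mem_centralizer_iff]
    intro r hr
    have hr' : n⁻¹ * r * n ∈ R := by
      have := (Subgroup.mem_normalizer_iff.mp ((Subgroup.normalizer (R : Set G)).inv_mem hn) r).mp hr
      simpa using this
    have hcomm : (n⁻¹ * r * n) * d = d * (n⁻¹ * r * n) :=
      Subgroup.mem_centralizer_iff.mp hd _ hr'
    calc r * (n * d * n⁻¹) = n * ((n⁻¹ * r * n) * d) * n⁻¹ := by group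
      _ = n * (d * (n⁻¹ * r * n)) * n⁻¹ := by rw [hcomm]
      _ = (n * d * n⁻¹) * r := by group
  have hCconj : ∀ n ∈ (Subgroup.normalizer (R : Set G)), ∀ c ∈ C, n * c * n⁻¹ ∈ C := by
    intro n hn c hc
    rw [hC, Subgroup.mem_centralizer_iff]
    intro d hd
    have hd' : n⁻¹ * d * n ∈ D := by
      have := hDconj n⁻¹ ((Subgroup.normalizer (R : Set G)).inv_mem hn) d hd
      simpa using this
    have hcomm : (n⁻¹ * d * n) * c = c * (n⁻¹ * d * n) :=
      Subgroup.mem_centralizer_iff.mp hc _ hd'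
    calc d * (n * c * n⁻¹) = n * ((n⁻¹ * d * n) * c) * n⁻¹ := by group
      _ = n * (c * (n⁻¹ * d * n)) * n⁻¹ := by rw [hcomm]
      _ = (n * c * n⁻¹) * d := by group
  set N' : Subgroup ↥C := (Subgroup.normalizer ((R.subgroupOf C : Subgroup ↥C) : Set ↥C)) with hN'
  -- characterization of the normalizer in `C`
  have hNorm : ∀ x : ↥C, x ∈ N' ↔ (x : G) ∈ (Subgroup.normalizer (R : Set G)) := by
    intro x
    constructor
    · intro hx
      rw [Subgroup.mem_normalizer_iff]
      intro g
      constructor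
      · intro hg
        have hgC : g ∈ C := hRC hg
        have := (Subgroup.mem_normalizer_iff.mp hx ⟨g, hgC⟩).mp
          (by simpa [Subgroup.mem_subgroupOf] using hg)
        simpa [Subgroup.mem_subgroupOf] using this
      · intro hg
        have hgC : g ∈ C := by
          have h1 : (x : G) * g * (x : G)⁻¹ ∈ C := hRC hg
          have h2 : g = (x : G)⁻¹ * ((x : G) * g * (x : G)⁻¹) * (x : G) := by group
          rw [h2]
          exact C.mul_mem (C.mul_mem (C.inv_mem x.2) h1) x.2
        have := (Subgroup.mem_normalizer_iff.mp hx ⟨g, hgC⟩).mpr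
          (by simpa [Subgroup.mem_subgroupOf] using hg)
        simpa [Subgroup.mem_subgroupOf] using this
    · intro hx
      rw [Subgroup.mem_normalizer_iff]
      intro y
      simp only [Subgroup.mem_subgroupOf]
      have := Subgroup.mem_normalizer_iff.mp hx (y : G)
      simpa using this
  -- `R` is a `p`-group
  have hRp : IsPGroup p R := by
    have h1 : IsPGroup p (R.subgroupOf (Subgroup.normalizer (R : Set G))) := by
      rw [hR]; exact pCore'_isPGroup p _
    exact h1.of_equiv (Subgroup.subgroupOfEquivOfLe Subgroup.le_normalizer)
  apply le_antisymm
  · exact le_pCore'_s4 Subgroup.normal_in_normalizer (hRp.comap_subtype).comap_subtype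
  · -- main direction
    set Q0 : Subgroup ↥N' := pCore' p ↥N' with hQ0def
    have hQ0n : Q0.Normal := pCore'_normal_s4 p _
    have hQ0p : IsPGroup p Q0 := pCore'_isPGroup p _
    set Q : Subgroup G := (Q0.map N'.subtype).map C.subtype with hQdef
    have hQp : IsPGroup p Q := (hQ0p.map _).map _
    have hQmem : ∀ q0 : ↥N', q0 ∈ Q0 → ((q0 : ↥C) : G) ∈ Q := fun q0 h =>
      Subgroup.mem_map.mpr ⟨(q0 : ↥C), Subgroup.mem_map.mpr ⟨q0, h, rfl⟩, rfl⟩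
    have hQmem' : ∀ g ∈ Q, ∃ q0 : ↥N', q0 ∈ Q0 ∧ ((q0 : ↥C) : G) = g := by
      intro g hg
      obtain ⟨c, hc, rfl⟩ := Subgroup.mem_map.mp hg
      obtain ⟨q0, hq0, rfl⟩ := Subgroup.mem_map.mp hc
      exact ⟨q0, hq0, rfl⟩
    have hQC : Q ≤ C := by
      intro g hg
      obtain ⟨q0, _, rfl⟩ := hQmem' g hg
      exact (q0 : ↥C).2
    have hQN : Q ≤ (Subgroup.normalizer (R : Set G)) := by
      intro g hg
      obtain ⟨q0, _, rfl⟩ := hQmem' g hg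
      exact (hNorm _).mp q0.2
    have hQconjM : ∀ m : G, m ∈ C → m ∈ (Subgroup.normalizer (R : Set G)) → ∀ q ∈ Q, m * q * m⁻¹ ∈ Q := by
      intro m hmC hmN q hq
      obtain ⟨q0, hq0, rfl⟩ := hQmem' q hq
      have hmN' : (⟨m, hmC⟩ : ↥C) ∈ N' := (hNorm _).mpr hmN
      have h1 := hQ0n.conj_mem q0 hq0 ⟨⟨m, hmC⟩, hmN'⟩
      have h2 := hQmem _ h1
      simpa using h2
    have hmax : ∀ K : Subgroup G, K ≤ C → K ≤ (Subgroup.normalizer (R : Set G)) → IsPGroup p K →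
        (∀ m : G, m ∈ C → m ∈ (Subgroup.normalizer (R : Set G)) → ∀ k ∈ K, m * k * m⁻¹ ∈ K) → K ≤ Q := by
      intro K hKC hKN hKp hKconj
      have hK2n : ((K.subgroupOf C).subgroupOf N').Normal := by
        constructor
        intro x hx g
        simp only [Subgroup.mem_subgroupOf] at hx ⊢
        have hgC : ((g : ↥C) : G) ∈ C := (g : ↥C).2
        have hgN : ((g : ↥C) : G) ∈ (Subgroup.normalizer (R : Set G)) := (hNorm _).mp g.2
        have := hKconj _ hgC hgN _ hx
        simpa using this
      have hK2p : IsPGroup p ((K.subgroupOf C).subgroupOf N') :=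
        (hKp.comap_subtype).comap_subtype
      have hK2Q0 : (K.subgroupOf C).subgroupOf N' ≤ Q0 := le_pCore'_s4 hK2n hK2p
      intro k hk
      have hkC : k ∈ C := hKC hk
      have hkN : (⟨k, hkC⟩ : ↥C) ∈ N' := (hNorm _).mpr (hKN hk)
      have hmem : (⟨⟨k, hkC⟩, hkN⟩ : ↥N') ∈ (K.subgroupOf C).subgroupOf N' := by
        simp only [Subgroup.mem_subgroupOf]; exact hk
      exact hQmem _ (hK2Q0 hmem)
    have hconjN : ∀ n ∈ (Subgroup.normalizer (R : Set G)), ∀ q ∈ Q, n * q * n⁻¹ ∈ Q := by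
      intro n hn
      have hKQ : Q.map (MulAut.conj n).toMonoidHom ≤ Q := by
        apply hmax
        · rintro _ ⟨q, hq, rfl⟩
          simpa using hCconj n hn q (hQC hq)
        · rintro _ ⟨q, hq, rfl⟩
          simpa using (Subgroup.normalizer (R : Set G)).mul_mem ((Subgroup.normalizer (R : Set G)).mul_mem hn (hQN hq))
            ((Subgroup.normalizer (R : Set G)).inv_mem hn)
        · exact hQp.map _
        · rintro m hmC hmN _ ⟨q, hq, rfl⟩
          have h1 : n⁻¹ * m * n ∈ C := by
            have := hCconj n⁻¹ ((Subgroup.normalizer (R : Set G)).inv_mem hn) m hmC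
            simpa using this
          have h2 : n⁻¹ * m * n ∈ (Subgroup.normalizer (R : Set G)) :=
            (Subgroup.normalizer (R : Set G)).mul_mem ((Subgroup.normalizer (R : Set G)).mul_mem ((Subgroup.normalizer (R : Set G)).inv_mem hn) hmN) hn
          have h3 := hQconjM _ h1 h2 q hq
          refine Subgroup.mem_map.mpr ⟨(n⁻¹ * m * n) * q * (n⁻¹ * m * n)⁻¹, h3, ?_⟩
          simp only [MulEquiv.coe_toMonoidHom, MulAut.conj_apply]
          group
      intro q hq
      exact hKQ (Subgroup.mem_map.mpr ⟨q, hq, rfl⟩)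
    have hQR : Q ≤ R := by
      have hsub : Q.subgroupOf (Subgroup.normalizer (R : Set G)) ≤ R.subgroupOf (Subgroup.normalizer (R : Set G)) := by
        rw [hR]
        apply le_pCore'_s4
        · constructor
          intro x hx g
          simp only [Subgroup.mem_subgroupOf] at hx ⊢
          have := hconjN (g : G) g.2 _ hx
          simpa using this
        · exact hQp.comap_subtype
      intro q hq
      have hqN : q ∈ (Subgroup.normalizer (R : Set G)) := hQN hq
      have hmem : (⟨q, hqN⟩ : ↥(Subgroup.normalizer (R : Set G))) ∈ Q.subgroupOf (Subgroup.normalizer (R : Set G)) := by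
        simp only [Subgroup.mem_subgroupOf]; exact hq
      have := hsub hmem
      simpa [Subgroup.mem_subgroupOf] using this
    intro x hx
    have hxQ : ((x : ↥C) : G) ∈ Q := hQmem x hx
    have := hQR hxQ
    simpa [Subgroup.mem_subgroupOf] using this
end

section
/- Let p be a prime, G a finite group and R a p-subgroup of G such that the center Z(R) is a Sylow p-subgroup of the centralizer Z_G(R). If O_p(N_G(R)/(R·Z_G(R))) = 1 (note that R·Z_G(R) is a normal subgroup of N_G(R)), then R is a radical p-subgroup of G. -/
open scoped Pointwise

/-- Let `R` be a `p`-subgroup of a finite group `G` such that `Z(R)` is a Sylow `p`-subgroup of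
`Z_G(R)`.  If `O_p(N_G(R)/(R·Z_G(R))) = 1` — expressed as: every subgroup `S` of `N_G(R)`
containing `R·Z_G(R) = R ⊔ Z_G(R)`, normalized by `N_G(R)`, and with `S/(R·Z_G(R))` a `p`-group
equals `R·Z_G(R)` — then `R` is a radical `p`-subgroup of `G`. -/
theorem statement_5 {G : Type*} [Group G] [Finite G] {p : ℕ} (hp : p.Prime)
    (R : Subgroup G) (hR : IsPGroup p R)
    (hsyl : ∃ P : Sylow p (Subgroup.centralizer (R : Set G)),
      (P : Subgroup (Subgroup.centralizer (R : Set G))) =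
        (R ⊓ Subgroup.centralizer (R : Set G)).subgroupOf (Subgroup.centralizer (R : Set G)))
    (hOp : ∀ S : Subgroup G, S ≤ Subgroup.normalizer (R : Set G) →
      R ⊔ Subgroup.centralizer (R : Set G) ≤ S →
      (∀ g ∈ Subgroup.normalizer (R : Set G), ∀ s ∈ S, g * s * g⁻¹ ∈ S) →
      (∀ s ∈ S, ∃ n : ℕ, s ^ p ^ n ∈ R ⊔ Subgroup.centralizer (R : Set G)) →
      S = R ⊔ Subgroup.centralizer (R : Set G)) :
    IsRadicalPSubgroup p R := by
  classical
  set C := Subgroup.centralizer (R : Set G) with hCdef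
  set N := Subgroup.normalizer (R : Set G) with hNdef
  obtain ⟨P, hP⟩ := hsyl
  -- centralizer is contained in normalizer
  have hCN : C ≤ N := by
    intro c hc
    rw [hNdef, Subgroup.mem_normalizer_iff]
    intro n
    constructor
    · intro hn
      have := hc n hn  -- n * c = c * n
      have : c * n * c⁻¹ = n := by rw [← this, mul_assoc, mul_inv_cancel, mul_one]
      rwa [this]
    · intro hn
      have hcomm := hc _ hn
      have he : c * n = c * (c * n * c⁻¹) := by rw [← hcomm]; group
      have h2 : n = c * n * c⁻¹ := mul_left_cancel he
      rwa [← h2] at hn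
  set R' := R.subgroupOf N with hR'def
  set C' := C.subgroupOf N with hC'def
  haveI hR'n : R'.Normal := Subgroup.normal_in_normalizer
  haveI hC'n : C'.Normal := by
    constructor
    rintro ⟨c, hcN⟩ hc ⟨g, hgN⟩
    rw [Subgroup.mem_subgroupOf] at hc ⊢
    rw [Subgroup.mem_centralizer_iff]
    intro r hr
    have hr' : g⁻¹ * r * g ∈ R := by
      have := (Subgroup.mem_normalizer_iff.mp hgN (g⁻¹ * r * g)).mpr
      apply this
      have : g * (g⁻¹ * r * g) * g⁻¹ = r := by group
      rwa [this]
    have hcomm := hc _ hr'  -- (g⁻¹*r*g) * c = c * (g⁻¹*r*g)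
    show r * (↑(⟨g, hgN⟩ * ⟨c, hcN⟩ * ⟨g, hgN⟩⁻¹ : N)) = _
    push_cast
    calc r * (g * c * g⁻¹) = g * ((g⁻¹ * r * g) * c) * g⁻¹ := by group
    _ = g * (c * (g⁻¹ * r * g)) * g⁻¹ := by rw [hcomm]
    _ = g * c * g⁻¹ * r := by group
  -- the key step: every normal p-subgroup of N is contained in R'
  have key : ∀ Q' : Subgroup N, Q'.Normal → IsPGroup p Q' → Q' ≤ R' := by
    intro Q' hQn hQp
    haveI := hQn
    set L' := R' ⊔ C' with hL'def
    haveI hL'n : L'.Normal := Subgroup.sup_normal R' C'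
    haveI : (Q' ⊔ L').Normal := Subgroup.sup_normal Q' L'
    have hL'map : L'.map N.subtype = R ⊔ C := by
      rw [hL'def, Subgroup.map_sup, hR'def, hC'def, Subgroup.subgroupOf_map_subtype,
        Subgroup.subgroupOf_map_subtype, inf_eq_left.2 Subgroup.le_normalizer,
        inf_eq_left.2 hCN]
    set Sg := (Q' ⊔ L').map N.subtype with hSgdef
    have h1 : Sg ≤ N := Subgroup.map_subtype_le _
    have h2 : R ⊔ C ≤ Sg := by
      rw [← hL'map]
      exact Subgroup.map_mono le_sup_right
    have h3 : ∀ g ∈ N, ∀ s ∈ Sg, g * s * g⁻¹ ∈ Sg := by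
      intro g hg s hs
      obtain ⟨t, ht, rfl⟩ := hs
      exact ⟨⟨g, hg⟩ * t * ⟨g, hg⟩⁻¹, Subgroup.Normal.conj_mem ‹(Q' ⊔ L').Normal› t ht ⟨g, hg⟩,
        rfl⟩
    have h4 : ∀ s ∈ Sg, ∃ n : ℕ, s ^ p ^ n ∈ R ⊔ C := by
      intro s hs
      obtain ⟨t, ht, rfl⟩ := hs
      have ht2 : t ∈ (Q' : Set ↥N) * (L' : Set ↥N) := by rw [← Subgroup.normal_mul]; exact ht
      obtain ⟨q, hq, l, hl, rfl⟩ := ht2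
      obtain ⟨n, hn⟩ := hQp ⟨q, hq⟩
      refine ⟨n, ?_⟩
      have hq1 : (q : N) ^ p ^ n = 1 := by
        have := congrArg (Subgroup.subtype Q') hn
        simpa using this
      have hmem : (q * l) ^ p ^ n ∈ L' := by
        rw [← QuotientGroup.eq_one_iff (G := N) (N := L')]
        have : ((q * l : N) : N ⧸ L') = (q : N ⧸ L') := by
          rw [QuotientGroup.mk_mul, (QuotientGroup.eq_one_iff (l : N)).2 hl, mul_one]
        rw [QuotientGroup.mk_pow, this, ← QuotientGroup.mk_pow, hq1, QuotientGroup.mk_one]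
      rw [← hL'map]
      exact ⟨(q * l) ^ p ^ n, hmem, map_pow N.subtype (q * l) (p ^ n)⟩
    have hS := hOp Sg h1 h2 h3 h4
    have hQL : Q' ≤ L' := by
      have h5 : Q'.map N.subtype ≤ R ⊔ C := by
        rw [← hS]
        exact Subgroup.map_mono le_sup_left
      rw [← hL'map] at h5
      exact Subgroup.map_subtype_le_map_subtype.mp h5
    -- second step : (R' ⊔ Q') ∩ C ≤ R  via the Sylow hypothesis
    set T' := R' ⊔ Q' with hT'def
    haveI hT'n : T'.Normal := Subgroup.sup_normal R' Q'
    have hT'p : IsPGroup p T' := IsPGroup.to_sup_of_normal_right hR.comap_subtype hQp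
    set T := T'.map N.subtype with hTdef
    have hTp : IsPGroup p T := hT'p.map N.subtype
    have hTconj : ∀ g ∈ N, ∀ t ∈ T, g * t * g⁻¹ ∈ T := by
      intro g hg t ht
      obtain ⟨u, hu, rfl⟩ := ht
      exact ⟨⟨g, hg⟩ * u * ⟨g, hg⟩⁻¹, hT'n.conj_mem u hu ⟨g, hg⟩, rfl⟩
    set D := (T ⊓ C).subgroupOf C with hDdef
    have hDp : IsPGroup p D := (hTp.to_inf_left).comap_subtype
    haveI hDn : D.Normal := by
      constructor
      rintro ⟨d, hdC⟩ hd ⟨c, hcC⟩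
      rw [Subgroup.mem_subgroupOf] at hd ⊢
      constructor
      · exact hTconj c (hCN hcC) d hd.1
      · exact Subgroup.mul_mem _ (Subgroup.mul_mem _ hcC hd.2) (Subgroup.inv_mem _ hcC)
    have hE : IsPGroup p ↥((P : Subgroup ↥C) ⊔ D) :=
      IsPGroup.to_sup_of_normal_right P.isPGroup' hDp
    have hEP : (P : Subgroup ↥C) ⊔ D = (P : Subgroup ↥C) := P.3 hE le_sup_left
    have hDP : D ≤ (R ⊓ C).subgroupOf C := by
      rw [← hP, ← hEP]
      exact le_sup_right
    have hTC : T ⊓ C ≤ R := by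
      intro x hx
      have hxC : x ∈ C := hx.2
      have : (⟨x, hxC⟩ : C) ∈ D := by rwa [Subgroup.mem_subgroupOf]
      have := hDP this
      rw [Subgroup.mem_subgroupOf] at this
      exact this.1
    -- conclude
    intro x hx
    have hxmul : x ∈ (R' : Set ↥N) * (C' : Set ↥N) := by
      rw [← Subgroup.normal_mul]; exact hQL hx
    obtain ⟨r, hr, c, hc, hrc⟩ := hxmul
    have hcT' : c ∈ T' := by
      have : c = r⁻¹ * x := by rw [← hrc]; group
      rw [this]
      exact Subgroup.mul_mem _ (Subgroup.inv_mem _ (le_sup_left (a := R') (b := Q') hr))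
        (le_sup_right (a := R') (b := Q') hx)
    have hcR : (c : G) ∈ R := by
      apply hTC
      constructor
      · exact ⟨c, hcT', rfl⟩
      · exact hc
    have hcR' : c ∈ R' := hcR
    rw [← hrc]
    exact Subgroup.mul_mem _ hr hcR'
  -- assemble
  show R.subgroupOf N = pCore' p N
  refine le_antisymm (le_sSup ⟨Subgroup.normal_in_normalizer, hR.comap_subtype⟩) (sSup_le ?_)
  rintro H ⟨h1, h2⟩
  exact key H h1 h2
end

section
/- Let q' be a prime power, let F be a finite field with (q')² elements, let ε ∈ {1, −1} ⊆ F, and let λ ∈ F satisfy λ^{q'} = λ (i.e., λ lies in the subfield with q' elements). Then there exist elements b, b' ∈ F such that b² + b'² = λ, b^{q'} = εb and (b')^{q'} = εb'. -/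
open Polynomial in
lemma aux_sq_add_sq (K : Type*) [Field K] [Fintype K] (hK : Fintype.card K % 2 = 1) (x : K) :
    ∃ a b : K, a ^ 2 + b ^ 2 = x := by
  obtain ⟨a, b, hab⟩ : ∃ a b, (X ^ 2 : K[X]).eval a + (X ^ 2 - C x).eval b = 0 :=
    FiniteField.exists_root_sum_quadratic (degree_X_pow 2)
      (degree_X_pow_sub_C (by norm_num) _) hK
  refine ⟨a, b, ?_⟩
  rw [← sub_eq_zero]
  simpa only [eval_C, eval_X, eval_pow, eval_sub, ← add_sub_assoc] using hab

open Polynomial in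
/-- Let `q'` be a prime power, `F` a finite field with `q'²` elements, `ε ∈ {1, -1} ⊆ F`, and
`λ ∈ F` with `λ^{q'} = λ`.  Then there exist `b, b' ∈ F` with `b² + b'² = λ`, `b^{q'} = ε·b`
and `b'^{q'} = ε·b'`. -/
theorem statement_10 (q' : ℕ) (hq' : IsPrimePow q')
    (F : Type*) [Field F] [Fintype F] (hF : Fintype.card F = q' ^ 2)
    (ε : F) (hε : ε = 1 ∨ ε = -1)
    (lam : F) (hlam : lam ^ q' = lam) :
    ∃ b b' : F, b ^ 2 + b' ^ 2 = lam ∧ b ^ q' = ε * b ∧ b' ^ q' = ε * b' := by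
  classical
  obtain ⟨p, k, hpp, hk, rfl⟩ := hq'
  have hp' : p.Prime := hpp.nat_prime
  haveI : Fact p.Prime := ⟨hp'⟩
  -- identify the characteristic
  have hcharF : CharP F p := by
    obtain ⟨n, hrp, hcard⟩ := FiniteField.card F (ringChar F)
    have hdvd : p ∣ ringChar F ^ (n : ℕ) := by
      rw [← hcard, hF, ← pow_mul]
      exact dvd_pow_self p (by positivity)
    have : p = ringChar F := ((Nat.prime_dvd_prime_iff_eq hp' hrp).mp
      (hp'.dvd_of_dvd_pow hdvd))
    rw [this]
    exact ringChar.charP F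
  haveI := hcharF
  rcases hp'.eq_two_or_odd' with rfl | hodd
  · -- characteristic 2 : ε = 1 and λ is a square of a fixed element
    have hneg : (-1 : F) = 1 := CharTwo.neg_eq 1
    have hε1 : ε = 1 := by rcases hε with h | h <;> simp [h, hneg]
    refine ⟨lam ^ 2 ^ (k - 1), 0, ?_, ?_, ?_⟩
    · have h2 : 2 ^ (k - 1) * 2 = 2 ^ k := by
        rw [← pow_succ, Nat.sub_add_cancel hk]
      rw [← pow_mul, h2, hlam]
      simp
    · rw [← pow_mul, mul_comm, pow_mul, hlam, hε1, one_mul]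
    · simp [zero_pow, (pow_pos (by norm_num : (0:ℕ) < 2) k).ne']
  · -- odd characteristic
    have hq1 : 1 < p ^ k := one_lt_pow₀ hp'.one_lt hk.ne'
    have hoddq : Odd (p ^ k) := hodd.pow
    -- the fixed subfield
    let K : Subring F :=
      { carrier := {x : F | x ^ p ^ k = x}
        zero_mem' := by simp [zero_pow, (Nat.lt_of_lt_of_le one_pos hq1.le).ne', hp'.ne_zero]
        one_mem' := one_pow _
        add_mem' := fun {x y} hx hy => by
          simp only [Set.mem_setOf_eq] at *
          rw [add_pow_char_pow, hx, hy]
        mul_mem' := fun {x y} hx hy => by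
          simp only [Set.mem_setOf_eq] at *
          rw [mul_pow, hx, hy]
        neg_mem' := fun {x} hx => by
          simp only [Set.mem_setOf_eq] at *
          rw [hoddq.neg_pow, hx] }
    have memK : ∀ x : F, x ∈ K ↔ x ^ p ^ k = x := fun x => Iff.rfl
    letI : Field K := Fintype.fieldOfDomain K
    have hcardK : Fintype.card K % 2 = 1 := by
      obtain ⟨m, -, hm⟩ := FiniteField.card K p
      rw [hm, Nat.odd_iff.mp (hodd.pow)]
    -- a nonzero element u with u ^ q' = ε u
    have hexu : ∃ u : F, u ≠ 0 ∧ u ^ p ^ k = ε * u := by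
      rcases hε with rfl | rfl
      · exact ⟨1, one_ne_zero, by simp⟩
      · -- find y not fixed by Frobenius
        obtain ⟨y, hy⟩ : ∃ y : F, y ^ p ^ k ≠ y := by
          by_contra h
          push_neg at h
          set P : F[X] := X ^ p ^ k - X with hP
          have hdeg : P.natDegree = p ^ k := by
            rw [hP]
            rw [Polynomial.natDegree_sub_eq_left_of_natDegree_lt] <;>
              simp [Polynomial.natDegree_X_pow, hq1]
          have hP0 : P ≠ 0 := fun h0 => by simp [h0] at hdeg; omega
          have hsub : (Finset.univ : Finset F) ⊆ P.roots.toFinset := by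
            intro y _
            rw [Multiset.mem_toFinset, Polynomial.mem_roots hP0]
            simp [hP, Polynomial.IsRoot, h y]
          have h1 : Fintype.card F ≤ P.roots.toFinset.card :=
            le_trans (le_of_eq (Finset.card_univ).symm) (Finset.card_le_card hsub)
          have h2 : P.roots.toFinset.card ≤ P.natDegree :=
            le_trans (Multiset.toFinset_card_le _) (Polynomial.card_roots' P)
          rw [hF, hdeg] at *
          nlinarith [h1.trans h2, hq1]
        refine ⟨y - y ^ p ^ k, by
          intro h0
          exact hy (by rwa [sub_eq_zero, eq_comm] at h0), ?_⟩
        have hyc : (y ^ p ^ k) ^ p ^ k = y := by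
          rw [← pow_mul, ← pow_two, ← hF]
          exact FiniteField.pow_card y
        rw [sub_pow_char_pow, hyc]
        ring
    obtain ⟨u, hu0, hu⟩ := hexu
    -- ε² = 1
    have hε2 : ε * ε = 1 := by rcases hε with rfl | rfl <;> ring
    -- u² lies in K, and so does lam / u²
    have hu2 : (u ^ 2) ^ p ^ k = u ^ 2 := by
      rw [← pow_mul, mul_comm, pow_mul, hu, mul_pow, pow_two, hε2, one_mul]
    have hu2ne : (u : F) ^ 2 ≠ 0 := pow_ne_zero 2 hu0
    have hlK : lam / u ^ 2 ∈ K := by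
      rw [memK, div_pow, hlam, hu2]
    obtain ⟨a, b, hab⟩ := aux_sq_add_sq K hcardK ⟨lam / u ^ 2, hlK⟩
    refine ⟨u * (a : F), u * (b : F), ?_, ?_, ?_⟩
    · have : ((a : F)) ^ 2 + ((b : F)) ^ 2 = lam / u ^ 2 := by
        have h := congrArg (Subtype.val) hab
        push_cast at h
        exact h
      field_simp at this ⊢
      linear_combination this
    · rw [mul_pow, hu, (memK _).mp a.2]; ring
    · rw [mul_pow, hu, (memK _).mp b.2]; ring
end

section
/- Let q be an odd prime power, let m ≥ 1 be an integer and set n = 2m, and let δ ∈ F_q^×. Suppose X, Y ∈ GL_n(F_q) satisfy XYX⁻¹Y⁻¹ = −I_n, X² = I_n and Y² = δ·I_n. Then there exists g ∈ GL_n(F_q) such that gXg⁻¹ is the block matrix with diagonal blocks −I_m and I_m (and zero off-diagonal blocks), and gYg⁻¹ is the block matrix with off-diagonal blocks I_m (top right) and δ·I_m (bottom left) and zero diagonal blocks. -/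
open Matrix LinearMap Module

set_option maxHeartbeats 1000000

/-- Let `q` be an odd prime power, `F = F_q`, `m ≥ 1`, `n = 2m`, and `δ ∈ F_q^×`.  If
`X, Y ∈ GL_n(F_q)` satisfy `XYX⁻¹Y⁻¹ = -I`, `X² = I` and `Y² = δ·I`, then the pair `(X, Y)` is
conjugate to the pair `(diag(-I_m, I_m), antidiag(I_m, δ·I_m))`. -/
theorem statement_11 (q : ℕ) (hq : Odd q) (hpp : IsPrimePow q)
    (F : Type*) [Field F] [Fintype F] (hcard : Fintype.card F = q)
    (m : ℕ) (hm : 1 ≤ m) (δ : Fˣ)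
    (X Y : (Matrix (Fin m ⊕ Fin m) (Fin m ⊕ Fin m) F)ˣ)
    (hcomm : ((X * Y * X⁻¹ * Y⁻¹ : _ˣ) : Matrix (Fin m ⊕ Fin m) (Fin m ⊕ Fin m) F) = -1)
    (hX2 : ((X : Matrix (Fin m ⊕ Fin m) (Fin m ⊕ Fin m) F)) ^ 2 = 1)
    (hY2 : ((Y : Matrix (Fin m ⊕ Fin m) (Fin m ⊕ Fin m) F)) ^ 2 = (δ : F) • 1) :
    ∃ g : (Matrix (Fin m ⊕ Fin m) (Fin m ⊕ Fin m) F)ˣ,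
      ((g * X * g⁻¹ : _ˣ) : Matrix (Fin m ⊕ Fin m) (Fin m ⊕ Fin m) F) =
        Matrix.fromBlocks (-1 : Matrix (Fin m) (Fin m) F) 0 0 1 ∧
      ((g * Y * g⁻¹ : _ˣ) : Matrix (Fin m ⊕ Fin m) (Fin m ⊕ Fin m) F) =
        Matrix.fromBlocks 0 (1 : Matrix (Fin m) (Fin m) F) ((δ : F) • 1) 0 := by
  classical
  set ι := (Fin m ⊕ Fin m) with hι
  -- characteristic is odd
  have h2 : (2 : F) ≠ 0 := by
    intro h
    have hch : ringChar F = 2 :=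
      CharP.ringChar_of_prime_eq_zero Nat.prime_two (by exact_mod_cast h)
    have := FiniteField.even_card_iff_char_two.mp hch
    rw [hcard] at this
    have hq2 := Nat.odd_iff.mp hq
    omega
  -- anticommutation at the matrix level
  have hu : X * Y * X⁻¹ * Y⁻¹ = (-1 : (Matrix ι ι F)ˣ) := Units.ext (by simpa using hcomm)
  have hXY : (X : Matrix ι ι F) * (Y : Matrix ι ι F)
      = -((Y : Matrix ι ι F) * (X : Matrix ι ι F)) := by
    have h1 : X * Y = (-1 : (Matrix ι ι F)ˣ) * Y * X := by
      rw [← hu]; group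
    calc (X : Matrix ι ι F) * (Y : Matrix ι ι F)
        = ((X * Y : (Matrix ι ι F)ˣ) : Matrix ι ι F) := by rw [Units.val_mul]
      _ = (((-1 : (Matrix ι ι F)ˣ) * Y * X : (Matrix ι ι F)ˣ) : Matrix ι ι F) := by rw [h1]
      _ = -((Y : Matrix ι ι F) * (X : Matrix ι ι F)) := by
          simp [Units.val_mul, neg_mul]
  -- pass to endomorphisms
  let E := Matrix.toLinAlgEquiv' (R := F) (n := ι)
  let x : (ι → F) →ₗ[F] (ι → F) := E (X : Matrix ι ι F)
  let y : (ι → F) →ₗ[F] (ι → F) := E (Y : Matrix ι ι F)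
  have hx2 : x * x = 1 := by
    rw [show (1 : (ι → F) →ₗ[F] (ι → F)) = E 1 from (_root_.map_one E).symm, ← _root_.map_mul]
    congr 1
    simpa [pow_two] using hX2
  have hy2 : y * y = (δ : F) • 1 := by
    have : (Y : Matrix ι ι F) * (Y : Matrix ι ι F) = (δ : F) • 1 := by
      simpa [pow_two] using hY2
    rw [show y * y = E ((Y : Matrix ι ι F) * (Y : Matrix ι ι F)) from (_root_.map_mul E _ _).symm, this,
      _root_.map_smul, _root_.map_one]
  have hxy : x * y = -(y * x) := by
    rw [show x * y = E ((X : Matrix ι ι F) * (Y : Matrix ι ι F)) from (_root_.map_mul E _ _).symm, hXY]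
    simp [x, y, _root_.map_neg, _root_.map_mul]
  have hxx : ∀ v, x (x v) = v := fun v => by
    have := LinearMap.ext_iff.mp hx2 v
    simpa [Module.End.mul_apply] using this
  have hyy : ∀ v, y (y v) = (δ : F) • v := fun v => by
    have := LinearMap.ext_iff.mp hy2 v
    simpa [Module.End.mul_apply] using this
  have hxyv : ∀ v, x (y v) = -(y (x v)) := fun v => by
    have := LinearMap.ext_iff.mp hxy v
    simpa [Module.End.mul_apply] using this
  have hyinj : Function.Injective y := by
    intro a b hab
    have h : (δ : F) • a = (δ : F) • b := by rw [← hyy, ← hyy, hab]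
    exact smul_right_injective (ι → F) (Units.ne_zero δ) h
  -- eigenspaces
  let P : Submodule F (ι → F) := LinearMap.ker (x + 1)
  let Q : Submodule F (ι → F) := LinearMap.ker (x - 1)
  have hmemP : ∀ v, v ∈ P ↔ x v = -v := by
    intro v
    simp only [P, LinearMap.mem_ker, LinearMap.add_apply, Module.End.one_apply, add_eq_zero_iff_eq_neg]
  have hmemQ : ∀ v, v ∈ Q ↔ x v = v := by
    intro v
    simp only [Q, LinearMap.mem_ker, LinearMap.sub_apply, Module.End.one_apply, sub_eq_zero]
  have hdis : Disjoint P Q := by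
    rw [Submodule.disjoint_def]
    intro v hP hQ
    have h1 : x v = -v := (hmemP v).mp hP
    have h2' : x v = v := (hmemQ v).mp hQ
    have : (2 : F) • v = 0 := by
      rw [two_smul]
      exact eq_neg_iff_add_eq_zero.mp (h2'.symm.trans h1)
    rcases smul_eq_zero.mp this with h | h
    · exact absurd h h2
    · exact h
  have hcompl : IsCompl P Q := by
    refine ⟨hdis, codisjoint_iff_le_sup.mpr fun v _ => ?_⟩
    have hvP : (2 : F)⁻¹ • (v - x v) ∈ P := by
      rw [hmemP, _root_.map_smul, _root_.map_sub, hxx]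
      rw [show x v - v = -(v - x v) by abel]
      rw [smul_neg]
    have hvQ : (2 : F)⁻¹ • (v + x v) ∈ Q := by
      rw [hmemQ, _root_.map_smul, _root_.map_add, hxx, add_comm]
    have : v = (2 : F)⁻¹ • (v - x v) + (2 : F)⁻¹ • (v + x v) := by
      rw [← smul_add, show v - x v + (v + x v) = (2 : F) • v by rw [two_smul]; abel,
        smul_smul, inv_mul_cancel₀ h2, one_smul]
    rw [this]
    exact Submodule.add_mem_sup hvP hvQ
  -- y swaps P and Q
  have hyP : ∀ v ∈ P, y v ∈ Q := by
    intro v hv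
    rw [hmemQ, hxyv, (hmemP v).mp hv, _root_.map_neg, neg_neg]
  have hyQ : ∀ v ∈ Q, y v ∈ P := by
    intro v hv
    rw [hmemP, hxyv, (hmemQ v).mp hv]
  -- dimensions
  have hfinV : finrank F (ι → F) = m + m := by
    simp [finrank_pi, hι]
  have hfrP : finrank F P = m := by
    have h1 : finrank F P + finrank F Q = m + m := by
      rw [Submodule.finrank_add_eq_of_isCompl hcompl, hfinV]
    have hresP : Function.Injective (y.restrict hyP) := by
      intro a b hab
      rw [LinearMap.restrict_apply, LinearMap.restrict_apply] at hab
      exact Subtype.ext (hyinj (congrArg Subtype.val hab))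
    have hresQ : Function.Injective (y.restrict hyQ) := by
      intro a b hab
      rw [LinearMap.restrict_apply, LinearMap.restrict_apply] at hab
      exact Subtype.ext (hyinj (congrArg Subtype.val hab))
    have hle1 : finrank F P ≤ finrank F Q :=
      LinearMap.finrank_le_finrank_of_injective hresP
    have hle2 : finrank F Q ≤ finrank F P :=
      LinearMap.finrank_le_finrank_of_injective hresQ
    omega
  -- basis of P
  let e : Basis (Fin m) F P := Module.finBasisOfFinrankEq F P hfrP
  -- candidate basis of the whole space
  let v₁ : Fin m → (ι → F) := fun i => (e i : ι → F)
  let v₂ : Fin m → (ι → F) := fun i => ((δ : F))⁻¹ • y (e i)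
  have hv₁P : ∀ i, v₁ i ∈ P := fun i => (e i).2
  have hv₂Q : ∀ i, v₂ i ∈ Q := fun i => Submodule.smul_mem _ _ (hyP _ (e i).2)
  have hind : LinearIndependent F (Sum.elim v₁ v₂) := by
    have he : LinearIndependent F v₁ := by
      have := e.linearIndependent.map' P.subtype P.ker_subtype
      exact this
    have hw : LinearIndependent F v₂ := by
      have hinj : Function.Injective (((δ : F))⁻¹ • y) := by
        intro a b hab
        simp only [LinearMap.smul_apply] at hab
        exact hyinj (smul_right_injective (ι → F) (inv_ne_zero (Units.ne_zero δ)) hab)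
      have := he.map' (((δ : F))⁻¹ • y) (LinearMap.ker_eq_bot.mpr hinj)
      exact this
    refine he.sum_type hw ?_
    refine hdis.mono ?_ ?_
    · rw [Submodule.span_le]
      rintro _ ⟨i, rfl⟩
      exact hv₁P i
    · rw [Submodule.span_le]
      rintro _ ⟨i, rfl⟩
      exact hv₂Q i
  have hcardι : Fintype.card ι = finrank F (ι → F) := by
    simp [hfinV, hι]
  have : Nonempty ι := ⟨Sum.inl ⟨0, hm⟩⟩
  let b : Basis ι F (ι → F) := basisOfLinearIndependentOfCardEqFinrank hind hcardι
  have hb : ∀ j, b j = Sum.elim v₁ v₂ j := fun j => by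
    simp only [b, coe_basisOfLinearIndependentOfCardEqFinrank]
  -- action of x on the basis
  have hxb : ∀ j : ι, x (b j) = Sum.elim (fun i => -(b (Sum.inl i))) (fun i => b (Sum.inr i)) j := by
    rintro (i | i)
    · rw [hb, Sum.elim_inl]
      rw [show x (v₁ i) = -(v₁ i) from (hmemP _).mp (hv₁P i)]
      rw [Sum.elim_inl, hb, Sum.elim_inl]
    · rw [hb, Sum.elim_inr]
      rw [show x (v₂ i) = v₂ i from (hmemQ _).mp (hv₂Q i)]
      rw [Sum.elim_inr, hb, Sum.elim_inr]
  -- action of y on the basis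
  have hyb : ∀ j : ι, y (b j) =
      Sum.elim (fun i => (δ : F) • b (Sum.inr i)) (fun i => b (Sum.inl i)) j := by
    rintro (i | i)
    · rw [hb, Sum.elim_inl, Sum.elim_inl, hb, Sum.elim_inr]
      show y (v₁ i) = (δ : F) • v₂ i
      rw [show v₂ i = (δ : F)⁻¹ • y (e i) from rfl, smul_smul,
        mul_inv_cancel₀ (Units.ne_zero δ), one_smul]
    · rw [hb, Sum.elim_inr, Sum.elim_inr, hb, Sum.elim_inl]
      show y (v₂ i) = v₁ i
      rw [show y (v₂ i) = (δ : F)⁻¹ • y (y (e i)) from _root_.map_smul y _ _, hyy,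
        smul_smul, inv_mul_cancel₀ (Units.ne_zero δ), one_smul]
  -- the matrices of x and y in basis b
  have hmx : LinearMap.toMatrix b b x = Matrix.fromBlocks (-1 : Matrix (Fin m) (Fin m) F) 0 0 1 := by
    ext k j
    rw [LinearMap.toMatrix_apply, hxb]
    rcases j with j | j <;> rcases k with k | k <;>
      simp [Matrix.one_apply, Finsupp.single_apply, eq_comm, Sum.inl.injEq, Sum.inr.injEq] <;>
      (by_cases h : j = k <;> simp [h]) <;>
      exact fun hc => (h (by injection hc)).elim
  have hmy : LinearMap.toMatrix b b y =
      Matrix.fromBlocks 0 (1 : Matrix (Fin m) (Fin m) F) ((δ : F) • 1) 0 := by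
    ext k j
    rw [LinearMap.toMatrix_apply, hyb]
    rcases j with j | j <;> rcases k with k | k <;>
      simp [Matrix.one_apply, Finsupp.single_apply, eq_comm, Sum.inl.injEq, Sum.inr.injEq] <;>
      (by_cases h : j = k <;> simp [h]) <;>
      exact fun hc => (h (by injection hc)).elim
  -- the conjugating matrix
  let s : Basis ι F (ι → F) := Pi.basisFun F ι
  have hg1 : b.toMatrix ⇑s * s.toMatrix ⇑b = 1 := b.toMatrix_mul_toMatrix_flip s
  have hg2 : s.toMatrix ⇑b * b.toMatrix ⇑s = 1 := s.toMatrix_mul_toMatrix_flip b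
  refine ⟨⟨b.toMatrix ⇑s, s.toMatrix ⇑b, hg1, hg2⟩, ?_, ?_⟩
  · show b.toMatrix ⇑s * (X : Matrix ι ι F) * s.toMatrix ⇑b = _
    rw [show (X : Matrix ι ι F) = LinearMap.toMatrix s s x by
      rw [LinearMap.toMatrix_eq_toMatrix']
      exact (LinearMap.toMatrix'_toLin' _).symm]
    rw [basis_toMatrix_mul_linearMap_toMatrix_mul_basis_toMatrix, hmx]
  · show b.toMatrix ⇑s * (Y : Matrix ι ι F) * s.toMatrix ⇑b = _
    rw [show (Y : Matrix ι ι F) = LinearMap.toMatrix s s y by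
      rw [LinearMap.toMatrix_eq_toMatrix']
      exact (LinearMap.toMatrix'_toLin' _).symm]
    rw [basis_toMatrix_mul_linearMap_toMatrix_mul_basis_toMatrix, hmy]
end

section
/- Let q be an odd prime power with 4 dividing q + 1, let m ≥ 1 be an integer and set n = 2m, and let b, b' ∈ F_q satisfy b² + b'² = −1 and b ≠ 0. Suppose X, Y ∈ GL_n(F_q) satisfy XYX⁻¹Y⁻¹ = −I_n and X² = Y² = −I_n. Then there exists g ∈ GL_n(F_q) such that gXg⁻¹ is the block matrix with off-diagonal blocks I_m (top right) and −I_m (bottom left) and zero diagonal blocks, and gYg⁻¹ is the block matrix with blocks b·I_m (top left), b'·I_m (top right), b'·I_m (bottom left) and −b·I_m (bottom right). -/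
set_option maxHeartbeats 1600000 in
open Matrix in

/-- Let `q` be an odd prime power with `4 ∣ q + 1`, `F = F_q`, `m ≥ 1`, `n = 2m`, and let
`b, b' ∈ F_q` with `b² + b'² = -1` and `b ≠ 0`.  If `X, Y ∈ GL_n(F_q)` satisfy
`XYX⁻¹Y⁻¹ = -I` and `X² = Y² = -I`, then the pair `(X, Y)` is conjugate to the pair
`(antidiag(I_m, -I_m), [[b·I_m, b'·I_m], [b'·I_m, -b·I_m]])`. -/
theorem statement_12 (q : ℕ) (hq : Odd q) (hpp : IsPrimePow q) (hq4 : 4 ∣ q + 1)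
    (F : Type*) [Field F] [Fintype F] (hcard : Fintype.card F = q)
    (m : ℕ) (hm : 1 ≤ m)
    (b b' : F) (hbb : b ^ 2 + b' ^ 2 = -1) (hb : b ≠ 0)
    (X Y : (Matrix (Fin m ⊕ Fin m) (Fin m ⊕ Fin m) F)ˣ)
    (hcomm : ((X * Y * X⁻¹ * Y⁻¹ : _ˣ) : Matrix (Fin m ⊕ Fin m) (Fin m ⊕ Fin m) F) = -1)
    (hX2 : ((X : Matrix (Fin m ⊕ Fin m) (Fin m ⊕ Fin m) F)) ^ 2 = -1)
    (hY2 : ((Y : Matrix (Fin m ⊕ Fin m) (Fin m ⊕ Fin m) F)) ^ 2 = -1) :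
    ∃ g : (Matrix (Fin m ⊕ Fin m) (Fin m ⊕ Fin m) F)ˣ,
      ((g * X * g⁻¹ : _ˣ) : Matrix (Fin m ⊕ Fin m) (Fin m ⊕ Fin m) F) =
        Matrix.fromBlocks 0 (1 : Matrix (Fin m) (Fin m) F) (-1) 0 ∧
      ((g * Y * g⁻¹ : _ˣ) : Matrix (Fin m ⊕ Fin m) (Fin m ⊕ Fin m) F) =
        Matrix.fromBlocks (b • (1 : Matrix (Fin m) (Fin m) F)) (b' • 1) (b' • 1) (-(b • 1)) := by
  classical
  -- characteristic is odd
  have h2F : (2 : F) ≠ 0 := by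
    intro h2
    have hring : ringChar F = 2 := by
      have hdvd : ringChar F ∣ 2 := by
        exact_mod_cast (CharP.cast_eq_zero_iff F (ringChar F) 2).mp (by exact_mod_cast h2)
      have h1 : ringChar F ≠ 1 := CharP.ringChar_ne_one
      rcases (Nat.prime_two.eq_one_or_self_of_dvd _ hdvd) with h | h
      · exact absurd h h1
      · exact h
    have := FiniteField.even_card_iff_char_two.mp hring
    rw [hcard] at this
    omega
  -- matrix relations
  have hXX : (X : Matrix (Fin m ⊕ Fin m) (Fin m ⊕ Fin m) F) * X = -1 := by
    rw [← sq]; exact hX2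
  have hYY : (Y : Matrix (Fin m ⊕ Fin m) (Fin m ⊕ Fin m) F) * Y = -1 := by
    rw [← sq]; exact hY2
  have hanti : (Y : Matrix (Fin m ⊕ Fin m) (Fin m ⊕ Fin m) F) * X =
      -((X : Matrix (Fin m ⊕ Fin m) (Fin m ⊕ Fin m) F) * Y) := by
    have h := congrArg
      (fun M : Matrix (Fin m ⊕ Fin m) (Fin m ⊕ Fin m) F =>
        M * (Y : Matrix (Fin m ⊕ Fin m) (Fin m ⊕ Fin m) F) *
          (X : Matrix (Fin m ⊕ Fin m) (Fin m ⊕ Fin m) F)) hcomm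
    simp only [Units.val_mul, mul_assoc, Units.inv_mul_cancel_left, Units.inv_mul, mul_one,
      neg_mul, one_mul] at h
    simpa using (congrArg Neg.neg h).symm
  -- auxiliary rewrite rules
  have hXa : ∀ A : Matrix (Fin m ⊕ Fin m) (Fin m ⊕ Fin m) F,
      (X : Matrix (Fin m ⊕ Fin m) (Fin m ⊕ Fin m) F) * ((X : Matrix _ _ F) * A) = -A := by
    intro A; rw [← mul_assoc, hXX, neg_mul, one_mul]
  have hYa : ∀ A : Matrix (Fin m ⊕ Fin m) (Fin m ⊕ Fin m) F,
      (Y : Matrix (Fin m ⊕ Fin m) (Fin m ⊕ Fin m) F) * ((Y : Matrix _ _ F) * A) = -A := by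
    intro A; rw [← mul_assoc, hYY, neg_mul, one_mul]
  have hYXa : ∀ A : Matrix (Fin m ⊕ Fin m) (Fin m ⊕ Fin m) F,
      (Y : Matrix (Fin m ⊕ Fin m) (Fin m ⊕ Fin m) F) * ((X : Matrix _ _ F) * A) =
        -((X : Matrix _ _ F) * ((Y : Matrix _ _ F) * A)) := by
    intro A; rw [← mul_assoc, hanti, neg_mul, mul_assoc]
  -- the involution S
  set S : Matrix (Fin m ⊕ Fin m) (Fin m ⊕ Fin m) F :=
    b • (Y : Matrix (Fin m ⊕ Fin m) (Fin m ⊕ Fin m) F) +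
      b' • ((X : Matrix (Fin m ⊕ Fin m) (Fin m ⊕ Fin m) F) *
        (Y : Matrix (Fin m ⊕ Fin m) (Fin m ⊕ Fin m) F)) with hSdef
  have hS2 : S * S = 1 := by
    rw [hSdef]
    simp only [add_mul, mul_add, smul_mul_assoc, mul_smul_comm, smul_smul, mul_assoc,
      hXa, hYa, hYXa, hYY, hXX, mul_neg, mul_one, neg_neg, smul_neg]
    match_scalars <;> (first | ring1 | linear_combination hbb | linear_combination -hbb | linear_combination 2*hbb | linear_combination -2*hbb)
  have hSX : S * (X : Matrix (Fin m ⊕ Fin m) (Fin m ⊕ Fin m) F) =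
      -((X : Matrix (Fin m ⊕ Fin m) (Fin m ⊕ Fin m) F) * S) := by
    rw [hSdef]
    simp only [add_mul, mul_add, smul_mul_assoc, mul_smul_comm, smul_smul, mul_assoc,
      hXa, hYa, hYXa, hYY, hXX, hanti, mul_neg, mul_one, neg_neg, smul_neg]
    match_scalars <;> (first | ring1 | linear_combination hbb | linear_combination -hbb | linear_combination 2*hbb | linear_combination -2*hbb)
  have hYS : (Y : Matrix (Fin m ⊕ Fin m) (Fin m ⊕ Fin m) F) =
      -(b • S) - b' • (S * (X : Matrix (Fin m ⊕ Fin m) (Fin m ⊕ Fin m) F)) := by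
    rw [hSdef]
    simp only [add_mul, mul_add, smul_add, smul_mul_assoc, mul_smul_comm, smul_smul, mul_assoc,
      hXa, hYa, hYXa, hYY, hXX, hanti, mul_neg, mul_one, neg_neg, smul_neg]
    match_scalars <;> (first | ring1 | linear_combination hbb | linear_combination -hbb | linear_combination 2*hbb | linear_combination -2*hbb)
  -- the (-1)-eigenspace of S
  set N : Submodule F ((Fin m ⊕ Fin m) → F) :=
    LinearMap.ker (S.mulVecLin + LinearMap.id) with hNdef
  have hmemN : ∀ v : (Fin m ⊕ Fin m) → F, v ∈ N ↔ S *ᵥ v = -v := by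
    intro v
    rw [hNdef, LinearMap.mem_ker, LinearMap.add_apply, LinearMap.id_apply,
      Matrix.mulVecLin_apply, add_eq_zero_iff_eq_neg]
  have hSXv : ∀ v : (Fin m ⊕ Fin m) → F, S *ᵥ v = -v →
      S *ᵥ ((X : Matrix (Fin m ⊕ Fin m) (Fin m ⊕ Fin m) F) *ᵥ v) = (X : Matrix _ _ F) *ᵥ v := by
    intro v hv
    rw [Matrix.mulVec_mulVec, hSX, Matrix.neg_mulVec, ← Matrix.mulVec_mulVec, hv,
      Matrix.mulVec_neg, neg_neg]
  have hYv : ∀ v : (Fin m ⊕ Fin m) → F, S *ᵥ v = -v →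
      (Y : Matrix (Fin m ⊕ Fin m) (Fin m ⊕ Fin m) F) *ᵥ v =
        b • v - b' • ((X : Matrix (Fin m ⊕ Fin m) (Fin m ⊕ Fin m) F) *ᵥ v) := by
    intro v hv
    have h1 := hSXv v hv
    conv_lhs => rw [hYS]
    rw [Matrix.sub_mulVec, Matrix.neg_mulVec, Matrix.smul_mulVec, hv,
      Matrix.smul_mulVec, ← Matrix.mulVec_mulVec, h1, smul_neg, neg_neg]
  have hYXv : ∀ v : (Fin m ⊕ Fin m) → F, S *ᵥ v = -v →
      (Y : Matrix (Fin m ⊕ Fin m) (Fin m ⊕ Fin m) F) *ᵥ ((X : Matrix _ _ F) *ᵥ v) =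
        -(b • ((X : Matrix (Fin m ⊕ Fin m) (Fin m ⊕ Fin m) F) *ᵥ v)) - b' • v := by
    intro v hv
    rw [Matrix.mulVec_mulVec, hanti, Matrix.neg_mulVec, ← Matrix.mulVec_mulVec, hYv v hv,
      Matrix.mulVec_sub, Matrix.mulVec_smul, Matrix.mulVec_smul, Matrix.mulVec_mulVec, hXX,
      Matrix.neg_mulVec, Matrix.one_mulVec]
    module
  -- the comparison map
  set L : (N × N) →ₗ[F] ((Fin m ⊕ Fin m) → F) :=
    N.subtype ∘ₗ LinearMap.fst F N N -
      (X : Matrix (Fin m ⊕ Fin m) (Fin m ⊕ Fin m) F).mulVecLin ∘ₗ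
        (N.subtype ∘ₗ LinearMap.snd F N N) with hLdef
  have hL : ∀ p : N × N, L p = ↑p.1 - (X : Matrix (Fin m ⊕ Fin m) (Fin m ⊕ Fin m) F) *ᵥ ↑p.2 :=
    fun p => rfl
  have hLinj : Function.Injective L := by
    rw [injective_iff_map_eq_zero]
    rintro ⟨⟨a, haN⟩, ⟨c, hcN⟩⟩ hp
    rw [hL] at hp
    dsimp only at hp
    rw [sub_eq_zero] at hp
    rw [hmemN] at haN hcN
    have h1 := hSXv c hcN
    rw [← hp, haN] at h1
    have ha0 : a = 0 := by
      have h2 : (2 : F) • a = 0 := by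
        rw [two_smul]
        nth_rewrite 1 [← neg_neg a, ← h1]
        simp
      rcases smul_eq_zero.mp h2 with h | h
      · exact absurd h h2F
      · exact h
    have hc0 : c = 0 := by
      have h3 : (X : Matrix (Fin m ⊕ Fin m) (Fin m ⊕ Fin m) F) *ᵥ c = 0 := by
        rw [← hp, ha0]
      have h4 := congrArg (fun w => ((X⁻¹ : _ˣ) : Matrix (Fin m ⊕ Fin m) (Fin m ⊕ Fin m) F) *ᵥ w) h3
      simpa only [Matrix.mulVec_mulVec, Matrix.mulVec_zero, Units.inv_mul,
        Matrix.one_mulVec] using h4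
    simp only [Prod.mk_eq_zero, Submodule.mk_eq_zero]
    exact ⟨ha0, hc0⟩
  have hLsurj : Function.Surjective L := by
    intro v
    have hSS : ∀ w : (Fin m ⊕ Fin m) → F, S *ᵥ (S *ᵥ w) = w := by
      intro w; rw [Matrix.mulVec_mulVec, hS2, Matrix.one_mulVec]
    set nv := (2 : F)⁻¹ • (v - S *ᵥ v) with hnv
    set pv := (2 : F)⁻¹ • (v + S *ᵥ v) with hpv
    have hn : S *ᵥ nv = -nv := by
      rw [hnv, Matrix.mulVec_smul, Matrix.mulVec_sub, hSS, ← smul_neg, neg_sub]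
    have hpev : S *ᵥ pv = pv := by
      rw [hpv, Matrix.mulVec_smul, Matrix.mulVec_add, hSS, add_comm]
    have hc : S *ᵥ ((X : Matrix (Fin m ⊕ Fin m) (Fin m ⊕ Fin m) F) *ᵥ pv) =
        -((X : Matrix _ _ F) *ᵥ pv) := by
      rw [Matrix.mulVec_mulVec, hSX, Matrix.neg_mulVec, ← Matrix.mulVec_mulVec, hpev]
    have hnvN : nv ∈ N := (hmemN nv).mpr hn
    have hcN' : (X : Matrix (Fin m ⊕ Fin m) (Fin m ⊕ Fin m) F) *ᵥ pv ∈ N := (hmemN _).mpr hc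
    refine ⟨(⟨nv, hnvN⟩, ⟨_, hcN'⟩), ?_⟩
    rw [hL]
    dsimp only
    simp only [Matrix.mulVec_mulVec, hXX, Matrix.neg_mulVec, Matrix.one_mulVec, sub_neg_eq_add]
    rw [hnv, hpv, ← smul_add]
    match_scalars <;> (field_simp; try ring1)
  -- linear equivalence and dimension count
  set E : (↥N × ↥N) ≃ₗ[F] ((Fin m ⊕ Fin m) → F) :=
    LinearEquiv.ofBijective L ⟨hLinj, hLsurj⟩ with hEdef
  have hEapp : ∀ p : ↥N × ↥N, E p = L p := fun p => rfl
  have hrankN : Module.finrank F N = m := by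
    have h1 := LinearEquiv.finrank_eq E
    rw [Module.finrank_prod, Module.finrank_fintype_fun_eq_card, Fintype.card_sum,
      Fintype.card_fin] at h1
    omega
  set bN : Module.Basis (Fin m) F N := Module.finBasisOfFinrankEq F N hrankN with hbNdef
  set B : Module.Basis (Fin m ⊕ Fin m) F ((Fin m ⊕ Fin m) → F) := (bN.prod bN).map E with hBdef
  have hBl : ∀ i, B (Sum.inl i) = (bN i : (Fin m ⊕ Fin m) → F) := by
    intro i
    have h : B (Sum.inl i) = L (bN i, 0) := by
      rw [hBdef, Module.Basis.map_apply, Module.Basis.prod_apply]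
      simp only [Sum.elim_inl, Function.comp_apply, LinearMap.inl_apply, hEapp]
    rw [h, hL]
    simp
  have hBr : ∀ i, B (Sum.inr i) =
      -((X : Matrix (Fin m ⊕ Fin m) (Fin m ⊕ Fin m) F) *ᵥ (bN i : (Fin m ⊕ Fin m) → F)) := by
    intro i
    have h : B (Sum.inr i) = L (0, bN i) := by
      rw [hBdef, Module.Basis.map_apply, Module.Basis.prod_apply]
      simp only [Sum.elim_inr, Function.comp_apply, LinearMap.inr_apply, hEapp]
    rw [h, hL]
    simp
  -- action of X and Y on the new basis
  have hmembN : ∀ c, S *ᵥ ((bN c : (Fin m ⊕ Fin m) → F)) = -(bN c : (Fin m ⊕ Fin m) → F) :=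
    fun c => (hmemN _).mp (bN c).2
  have hXBl : ∀ c, (X : Matrix (Fin m ⊕ Fin m) (Fin m ⊕ Fin m) F) *ᵥ B (Sum.inl c) =
      -(B (Sum.inr c)) := by
    intro c; rw [hBl, hBr, neg_neg]
  have hXBr : ∀ c, (X : Matrix (Fin m ⊕ Fin m) (Fin m ⊕ Fin m) F) *ᵥ B (Sum.inr c) =
      B (Sum.inl c) := by
    intro c
    rw [hBl, hBr, Matrix.mulVec_neg, Matrix.mulVec_mulVec, hXX, Matrix.neg_mulVec,
      Matrix.one_mulVec, neg_neg]
  have hYBl : ∀ c, (Y : Matrix (Fin m ⊕ Fin m) (Fin m ⊕ Fin m) F) *ᵥ B (Sum.inl c) =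
      b • B (Sum.inl c) + b' • B (Sum.inr c) := by
    intro c
    rw [hBl, hBr, hYv _ (hmembN c)]
    module
  have hYBr : ∀ c, (Y : Matrix (Fin m ⊕ Fin m) (Fin m ⊕ Fin m) F) *ᵥ B (Sum.inr c) =
      b' • B (Sum.inl c) + (-b) • B (Sum.inr c) := by
    intro c
    rw [hBl, hBr, Matrix.mulVec_neg, hYXv _ (hmembN c)]
    module
  -- the change of basis matrix
  set e0 : Module.Basis (Fin m ⊕ Fin m) F ((Fin m ⊕ Fin m) → F) := Pi.basisFun F (Fin m ⊕ Fin m)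
    with he0
  set Pm : Matrix (Fin m ⊕ Fin m) (Fin m ⊕ Fin m) F := e0.toMatrix ⇑B with hPmdef
  have iP : Invertible Pm := e0.invertibleToMatrix B
  have hPm : ∀ i j, Pm i j = B j i := by
    intro i j
    rw [hPmdef, Module.Basis.toMatrix_apply, he0]
    exact Pi.basisFun_repr F _ (B j) i
  have hcol : ∀ (M : Matrix (Fin m ⊕ Fin m) (Fin m ⊕ Fin m) F) i j,
      ∑ k, M i k * Pm k j = (M *ᵥ B j) i := by
    intro M i j
    rw [Matrix.mulVec]
    simp [dotProduct, hPm]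
  have hXP : (X : Matrix (Fin m ⊕ Fin m) (Fin m ⊕ Fin m) F) * Pm =
      Pm * Matrix.fromBlocks 0 (1 : Matrix (Fin m) (Fin m) F) (-1) 0 := by
    ext i j
    rw [Matrix.mul_apply, Matrix.mul_apply, hcol]
    cases j with
    | inl c =>
      rw [hXBl c, Fintype.sum_sum_type]
      simp [hPm, Matrix.one_apply, mul_ite]
    | inr c =>
      rw [hXBr c, Fintype.sum_sum_type]
      simp [hPm, Matrix.one_apply, mul_ite]
  have hYP : (Y : Matrix (Fin m ⊕ Fin m) (Fin m ⊕ Fin m) F) * Pm =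
      Pm * Matrix.fromBlocks (b • (1 : Matrix (Fin m) (Fin m) F)) (b' • 1) (b' • 1)
        (-(b • 1)) := by
    ext i j
    rw [Matrix.mul_apply, Matrix.mul_apply, hcol]
    cases j with
    | inl c =>
      rw [hYBl c, Fintype.sum_sum_type]
      simp [hPm, Matrix.one_apply, mul_ite, Matrix.smul_apply, Pi.add_apply, Pi.smul_apply,
        smul_eq_mul]
      ring
    | inr c =>
      rw [hYBr c, Fintype.sum_sum_type]
      simp [hPm, Matrix.one_apply, mul_ite, Matrix.smul_apply, Pi.add_apply, Pi.smul_apply,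
        smul_eq_mul]
      ring
  -- conclusion
  refine ⟨⟨⅟Pm, Pm, invOf_mul_self Pm, mul_invOf_self Pm⟩, ?_, ?_⟩
  · show ⅟Pm * (X : Matrix (Fin m ⊕ Fin m) (Fin m ⊕ Fin m) F) * Pm = _
    rw [mul_assoc, hXP, ← mul_assoc, invOf_mul_self, one_mul]
  · show ⅟Pm * (Y : Matrix (Fin m ⊕ Fin m) (Fin m ⊕ Fin m) F) * Pm = _
    rw [mul_assoc, hYP, ← mul_assoc, invOf_mul_self, one_mul]
end

section
/- Let q be an odd prime power and let V be a finite-dimensional vector space over F_q equipped with a nondegenerate symmetric bilinear form f. If there exists an isometry X of (V, f) with X ∘ X = −id_V, then dim V is even and the discriminant of f is trivial; that is, for any basis of V, the determinant of the Gram matrix of f is a square in F_q^×. -/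
open Matrix

lemma skew_det_sq {F : Type*} [Field F] (h2 : (2:F) ≠ 0) :
    ∀ (n : ℕ) (A : Matrix (Fin n) (Fin n) F), Aᵀ = -A → A.det ≠ 0 →
      ∃ c : F, c ≠ 0 ∧ A.det = c ^ 2 := by
  intro n
  induction n using Nat.strong_induction_on with
  | _ n ih =>
  intro A hskew hdet
  have hdiag : ∀ i, A i i = 0 := by
    intro i
    have h := congrFun (congrFun hskew i) i
    simp only [transpose_apply, neg_apply] at h
    have h0 : A i i + A i i = 0 := by nth_rewrite 1 [h]; exact neg_add_cancel _
    have h1 : (2:F) * A i i = 0 := by rw [two_mul]; exact h0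
    rcases mul_eq_zero.mp h1 with h' | h'
    · exact absurd h' h2
    · exact h'
  match n with
  | 0 => exact ⟨1, one_ne_zero, by simp [Matrix.det_fin_zero]⟩
  | 1 =>
      exact absurd (Matrix.det_eq_zero_of_row_eq_zero 0 (fun j => by
        rw [Subsingleton.elim j 0]; exact hdiag 0)) hdet
  | (m+2) =>
  obtain ⟨j, hj⟩ : ∃ j, A 0 j ≠ 0 := by
    by_contra h
    push_neg at h
    exact hdet (Matrix.det_eq_zero_of_row_eq_zero 0 h)
  have hj0 : j ≠ 0 := fun h => hj (h ▸ hdiag 0)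
  set σ := Equiv.swap (1 : Fin (m+2)) j with hσ
  set B : Matrix (Fin (m+2)) (Fin (m+2)) F := A.submatrix σ σ with hB
  have hBskew : Bᵀ = -B := by
    ext i k
    have := congrFun (congrFun hskew (σ i)) (σ k)
    simpa [hB] using this
  have hσ0 : σ 0 = 0 :=
    Equiv.swap_apply_of_ne_of_ne (by simp [Fin.ext_iff]) (Ne.symm hj0)
  have hσ1 : σ 1 = j := Equiv.swap_apply_left _ _
  set a := A 0 j with ha
  have hB01 : B 0 1 = a := by simp [hB, hσ0, hσ1, ha]
  have hBdiag : ∀ i, B i i = 0 := fun i => hdiag (σ i)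
  have hB10 : B 1 0 = -a := by
    have := congrFun (congrFun hBskew 0) 1
    simp only [transpose_apply, Matrix.neg_apply] at this
    rw [this, hB01]
  set e : Fin 2 ⊕ Fin m ≃ Fin (m+2) :=
    finSumFinEquiv.trans (finCongr (by omega)) with he
  set C : Matrix (Fin 2 ⊕ Fin m) (Fin 2 ⊕ Fin m) F := B.submatrix e e with hC
  have hCdet : C.det = A.det := by
    rw [hC, Matrix.det_submatrix_equiv_self, hB, Matrix.det_submatrix_equiv_self]
  have hCskew : Cᵀ = -C := by
    ext i k
    have := congrFun (congrFun hBskew (e i)) (e k)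
    simpa [hC] using this
  have he0 : e (Sum.inl 0) = 0 := rfl
  have he1 : e (Sum.inl 1) = 1 := rfl
  have hC11 : C.toBlocks₁₁ = !![0, a; -a, 0] := by
    ext i k
    fin_cases i <;> fin_cases k <;>
      simp [Matrix.toBlocks₁₁, hC, he0, he1, hBdiag, hB01, hB10]
  set D : Matrix (Fin 2) (Fin 2) F := !![0, -a⁻¹; a⁻¹, 0] with hD
  have hCD : C.toBlocks₁₁ * D = 1 := by
    rw [hC11, hD, Matrix.mul_fin_two, Matrix.one_fin_two]
    congr 1 <;> norm_num [mul_inv_cancel₀ hj, inv_mul_cancel₀ hj]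
  have hDC : D * C.toBlocks₁₁ = 1 := by
    rw [hC11, hD, Matrix.mul_fin_two, Matrix.one_fin_two]
    congr 1 <;> norm_num [mul_inv_cancel₀ hj, inv_mul_cancel₀ hj]
  letI : Invertible C.toBlocks₁₁ := ⟨D, hDC, hCD⟩
  have hinvD : ⅟ C.toBlocks₁₁ = D := rfl
  have hdetC11 : C.toBlocks₁₁.det = a^2 := by
    rw [hC11, Matrix.det_fin_two_of]; ring
  set S : Matrix (Fin m) (Fin m) F :=
    C.toBlocks₂₂ - C.toBlocks₂₁ * D * C.toBlocks₁₂ with hS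
  have hdetsplit : C.det = a^2 * S.det := by
    conv_lhs => rw [← Matrix.fromBlocks_toBlocks C]
    rw [Matrix.det_fromBlocks₁₁, hinvD, hdetC11, hS]
  have h12 : (C.toBlocks₂₁)ᵀ = -C.toBlocks₁₂ := by
    ext i k
    have := congrFun (congrFun hCskew (Sum.inl i)) (Sum.inr k)
    simpa [Matrix.toBlocks₂₁, Matrix.toBlocks₁₂] using this
  have h21 : (C.toBlocks₁₂)ᵀ = -C.toBlocks₂₁ := by
    ext i k
    have := congrFun (congrFun hCskew (Sum.inr i)) (Sum.inl k)
    simpa [Matrix.toBlocks₂₁, Matrix.toBlocks₁₂] using this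
  have h22 : (C.toBlocks₂₂)ᵀ = -C.toBlocks₂₂ := by
    ext i k
    have := congrFun (congrFun hCskew (Sum.inr i)) (Sum.inr k)
    simpa [Matrix.toBlocks₂₂] using this
  have hDT : Dᵀ = -D := by
    rw [hD]; ext i k; fin_cases i <;> fin_cases k <;> simp
  have hSskew : Sᵀ = -S := by
    rw [hS, Matrix.transpose_sub, Matrix.transpose_mul, Matrix.transpose_mul,
      h12, h21, h22, hDT]
    simp only [Matrix.neg_mul, Matrix.mul_neg, neg_neg, neg_sub]
    rw [Matrix.mul_assoc]
    abel
  have hSdet : S.det ≠ 0 := by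
    intro h
    rw [← hCdet, hdetsplit, h, mul_zero] at hdet
    exact hdet rfl
  obtain ⟨c, hc, hc2⟩ := ih m (by omega) S hSskew hSdet
  refine ⟨a * c, mul_ne_zero hj hc, ?_⟩
  rw [← hCdet, hdetsplit, hc2]; ring

lemma gram_key {F : Type*} [Field F] (h2 : (2:F) ≠ 0)
    {V : Type*} [AddCommGroup V] [Module F V] [FiniteDimensional F V]
    (B : LinearMap.BilinForm F V)
    (hsymm : ∀ u v : V, B u v = B v u)
    (hnd : ∀ u : V, (∀ v : V, B u v = 0) → u = 0)
    (X : V ≃ₗ[F] V) (hiso : ∀ u v : V, B (X u) (X v) = B u v)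
    (hX2 : ∀ v : V, X (X v) = -v)
    (ι : Type*) [Fintype ι] [DecidableEq ι] (b : Module.Basis ι F V) :
    (-1 : F) ^ (Fintype.card ι) = 1 ∧
      ∃ c : F, c ≠ 0 ∧ (Matrix.of fun i j => B (b i) (b j)).det = c ^ 2 := by
  classical
  set n := Fintype.card ι with hn
  set G : Matrix ι ι F := LinearMap.BilinForm.toMatrix b B with hG
  have hGof : (Matrix.of fun i j => B (b i) (b j)) = G := by
    ext i j
    simp [hG, LinearMap.BilinForm.toMatrix_apply]
  set M : Matrix ι ι F := LinearMap.toMatrix b b X.toLinearMap with hM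
  have hMM : M * M = -1 := by
    have hcomp : (X.toLinearMap ∘ₗ X.toLinearMap) = -LinearMap.id := by
      ext v; simp [hX2]
    rw [hM, ← LinearMap.toMatrix_comp b b b, hcomp, map_neg, LinearMap.toMatrix_id]
  have hMGM : Mᵀ * G * M = G := by
    have hcomp : B.comp X.toLinearMap X.toLinearMap = B := by
      apply LinearMap.ext; intro u; apply LinearMap.ext; intro v
      simpa [LinearMap.BilinForm.comp_apply] using hiso u v
    rw [hG, hM, ← LinearMap.BilinForm.toMatrix_comp b b B, hcomp]
  have hGdet : G.det ≠ 0 := by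
    rw [hG]
    exact (LinearMap.BilinForm.nondegenerate_iff_det_ne_zero b).mp
      ⟨hnd, fun v h => hnd v (fun u => by rw [hsymm]; exact h u)⟩
  have hGT : Gᵀ = G := by
    ext i j
    simp [hG, LinearMap.BilinForm.toMatrix_apply, hsymm (b j) (b i)]
  have h2n : (2:F)^n ≠ 0 := pow_ne_zero _ h2
  have hMTG : Mᵀ * G = -(G * M) := by
    have h1 : Mᵀ * G * (M * M) = G * M := by
      rw [← Matrix.mul_assoc, hMGM]
    rw [hMM, Matrix.mul_neg, Matrix.mul_one] at h1
    linear_combination (norm := abel) -h1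
  have hTrans : (G * (1 + M))ᵀ = G * (1 - M) := by
    rw [Matrix.transpose_mul, Matrix.transpose_add, Matrix.transpose_one, hGT,
      Matrix.add_mul, Matrix.one_mul, hMTG, Matrix.mul_sub, Matrix.mul_one]
    abel
  have hdet1 : (1 + M).det = (1 - M).det := by
    have h := congrArg Matrix.det hTrans
    rw [Matrix.det_transpose, Matrix.det_mul, Matrix.det_mul] at h
    exact mul_left_cancel₀ hGdet h
  have hprod : (1 + M) * (1 - M) = (2:F) • (1 : Matrix ι ι F) := by
    have expand : (1 + M) * (1 - M) = 1 - M * M := by noncomm_ring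
    rw [expand, hMM, two_smul]
    abel
  have hsq : (1 + M).det * (1 - M).det = (2:F)^n := by
    rw [← Matrix.det_mul, hprod, Matrix.det_smul, Matrix.det_one, mul_one, hn]
  have hsq2 : (1 + M) * (1 + M) = (2:F) • M := by
    have expand : (1 + M) * (1 + M) = 1 + M + M + M * M := by noncomm_ring
    rw [expand, hMM, two_smul]
    abel
  have hdetM : M.det = 1 := by
    have h1 : (1 + M).det * (1 + M).det = (2:F)^n * M.det := by
      rw [← Matrix.det_mul, hsq2, Matrix.det_smul, hn]
    have h3 : (2:F)^n * M.det = (2:F)^n := by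
      calc (2:F)^n * M.det = (1 + M).det * (1 + M).det := h1.symm
        _ = (1 + M).det * (1 - M).det := by rw [hdet1]
        _ = (2:F)^n := hsq
    exact mul_left_cancel₀ h2n (by rw [h3, mul_one])
  constructor
  · have h := congrArg Matrix.det hMM
    have hneg : ((-1 : Matrix ι ι F)).det = (-1:F)^n := by
      have := Matrix.det_neg (1 : Matrix ι ι F)
      rw [Matrix.det_one, mul_one] at this
      rw [this, hn]
    rw [Matrix.det_mul, hdetM, mul_one, hneg] at h
    exact h.symm
  · set A : Matrix ι ι F := G * M with hA
    have hAskew : Aᵀ = -A := by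
      rw [hA, Matrix.transpose_mul, hGT, hMTG]
    have hAdet : A.det = G.det := by
      rw [hA, Matrix.det_mul, hdetM, mul_one]
    set eqv : Fin n ≃ ι := (Fintype.equivFin ι).symm with heqv
    set A' : Matrix (Fin n) (Fin n) F := A.submatrix eqv eqv with hA'
    have hA'skew : A'ᵀ = -A' := by
      ext i k
      have := congrFun (congrFun hAskew (eqv i)) (eqv k)
      simpa [hA'] using this
    have hA'det : A'.det = G.det := by
      rw [hA', Matrix.det_submatrix_equiv_self, hAdet]
    obtain ⟨c, hc, hc2⟩ := skew_det_sq h2 n A' hA'skew (by rw [hA'det]; exact hGdet)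
    exact ⟨c, hc, by rw [hGof, ← hA'det, hc2]⟩

/-- Let `q` be an odd prime power and `(V, B)` a finite-dimensional F_q-vector space with a
nondegenerate symmetric bilinear form.  If there is an isometry `X` of `(V, B)` with
`X ∘ X = -id`, then `dim V` is even and the discriminant of `B` is trivial: for every basis,
the determinant of the Gram matrix is a nonzero square. -/
theorem statement_13 (q : ℕ) (hq : Odd q) (hpp : IsPrimePow q)
    (F : Type*) [Field F] [Fintype F] (hcard : Fintype.card F = q)
    (V : Type*) [AddCommGroup V] [Module F V] [FiniteDimensional F V]
    (B : LinearMap.BilinForm F V)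
    (hsymm : ∀ u v : V, B u v = B v u)
    (hnd : ∀ u : V, (∀ v : V, B u v = 0) → u = 0)
    (X : V ≃ₗ[F] V) (hiso : ∀ u v : V, B (X u) (X v) = B u v)
    (hX2 : ∀ v : V, X (X v) = -v) :
    Even (Module.finrank F V) ∧
      ∀ (ι : Type) [Fintype ι] [DecidableEq ι] (b : Module.Basis ι F V),
        ∃ c : F, c ≠ 0 ∧ (Matrix.of fun i j => B (b i) (b j)).det = c ^ 2 := by
  have h2 : (2:F) ≠ 0 := by
    apply Ring.two_ne_zero
    intro h
    have heven := FiniteField.even_card_of_char_two h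
    rw [hcard] at heven
    have := Nat.odd_iff.mp hq
    omega
  constructor
  · set b0 := Module.finBasis F V with hb0
    have key := (gram_key h2 B hsymm hnd X hiso hX2 _ b0).1
    rw [Fintype.card_fin] at key
    rcases Nat.even_or_odd (Module.finrank F V) with he | ho
    · exact he
    · exfalso
      rw [Odd.neg_one_pow ho] at key
      exact h2 (by linear_combination -key)
  · intro ι _ _ b
    exact (gram_key h2 B hsymm hnd X hiso hX2 ι b).2
end

section
/- Let q be an odd prime power and let V be a finite-dimensional vector space over F_q equipped with a nondegenerate symmetric bilinear form f. If there exist isometries X and Y of (V, f) with X ∘ X = id_V and Y ∘ X ∘ Y⁻¹ = −X, then dim V is even and the discriminant of f is trivial; that is, for any basis of V, the determinant of the Gram matrix of f is a square in F_q^×. -/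
/-- Let `q` be an odd prime power and `(V, B)` a finite-dimensional F_q-vector space with a
nondegenerate symmetric bilinear form.  If there are isometries `X, Y` of `(V, B)` with
`X ∘ X = id` and `Y ∘ X ∘ Y⁻¹ = -X`, then `dim V` is even and the discriminant of `B` is
trivial: for every basis, the determinant of the Gram matrix is a nonzero square. -/
theorem statement_14 (q : ℕ) (hq : Odd q) (hpp : IsPrimePow q)
    (F : Type*) [Field F] [Fintype F] (hcard : Fintype.card F = q)
    (V : Type*) [AddCommGroup V] [Module F V] [FiniteDimensional F V]
    (B : LinearMap.BilinForm F V)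
    (hsymm : ∀ u v : V, B u v = B v u)
    (hnd : ∀ u : V, (∀ v : V, B u v = 0) → u = 0)
    (X Y : V ≃ₗ[F] V)
    (hXiso : ∀ u v : V, B (X u) (X v) = B u v)
    (hYiso : ∀ u v : V, B (Y u) (Y v) = B u v)
    (hX2 : ∀ v : V, X (X v) = v)
    (hconj : ∀ v : V, Y (X (Y.symm v)) = -(X v)) :
    Even (Module.finrank F V) ∧
      ∀ (ι : Type) [Fintype ι] [DecidableEq ι] (b : Module.Basis ι F V),
        ∃ c : F, c ≠ 0 ∧ (Matrix.of fun i j => B (b i) (b j)).det = c ^ 2 := by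
  classical
  -- characteristic is odd, so 2 ≠ 0
  have h2 : (2 : F) ≠ 0 := by
    intro h
    have hdvd : ringChar F ∣ 2 := (ringChar.spec F 2).mp (by exact_mod_cast h)
    have hprime : (ringChar F).Prime := CharP.char_is_prime F (ringChar F)
    have hchar2 : ringChar F = 2 := ((Nat.prime_dvd_prime_iff_eq hprime Nat.prime_two).mp hdvd)
    obtain ⟨n, hn⟩ := FiniteField.card F (ringChar F)
    rw [hchar2, hcard] at hn
    exact (Nat.not_even_iff_odd.mpr hq) (hn.2 ▸ (Nat.even_pow.mpr ⟨even_two, n.pos.ne'⟩))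
  -- eigenspaces
  set Vp : Submodule F V := LinearMap.ker (X.toLinearMap - LinearMap.id) with hVp
  set Vm : Submodule F V := LinearMap.ker (X.toLinearMap + LinearMap.id) with hVm
  have memVp : ∀ v : V, v ∈ Vp ↔ X v = v := by
    intro v
    simp [hVp, LinearMap.mem_ker, sub_eq_zero]
  have memVm : ∀ v : V, v ∈ Vm ↔ X v = -v := by
    intro v
    simp [hVm, LinearMap.mem_ker, add_eq_zero_iff_eq_neg]
  have compl : IsCompl Vp Vm := by
    constructor
    · rw [disjoint_iff]
      ext u
      simp only [Submodule.mem_inf, Submodule.mem_bot, memVp, memVm]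
      constructor
      · rintro ⟨h1, h2'⟩
        have : (2 : F) • u = 0 := by
          rw [two_smul]
          nth_rewrite 1 [← h1]
          rw [h2']; abel
        rcases smul_eq_zero.mp this with h | h
        · exact absurd h h2
        · exact h
      · rintro rfl; simp [map_zero]
    · rw [codisjoint_iff, eq_top_iff]
      intro v _
      refine Submodule.mem_sup.mpr ⟨(2:F)⁻¹ • (v + X v), ?_, (2:F)⁻¹ • (v - X v), ?_, ?_⟩
      · rw [memVp]
        simp only [map_smul, map_add, hX2]
        rw [add_comm]
      · rw [memVm]
        simp only [map_smul, map_sub, hX2, smul_neg]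
        rw [← smul_neg, neg_sub]
      · rw [← smul_add]
        have : v + X v + (v - X v) = (2:F) • v := by rw [two_smul]; abel
        rw [this, smul_smul, inv_mul_cancel₀ h2, one_smul]
  -- Y maps Vp onto Vm
  have hYp : ∀ u : V, X u = u → X (Y u) = -(Y u) := by
    intro u hu
    have h := hconj (Y u)
    rw [Y.symm_apply_apply, hu] at h
    exact (neg_eq_iff_eq_neg.mpr h).symm
  have hYm : ∀ u : V, X u = -u → X (Y.symm u) = Y.symm u := by
    intro u hu
    have := hconj u
    rw [hu, neg_neg] at this
    have := congrArg Y.symm this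
    rwa [Y.symm_apply_apply] at this
  have hmap : Vp.map (Y : V →ₗ[F] V) = Vm := by
    ext w
    simp only [Submodule.mem_map]
    constructor
    · rintro ⟨u, hu, rfl⟩
      exact (memVm _).mpr (hYp u ((memVp u).mp hu))
    · intro hw
      refine ⟨Y.symm w, (memVp _).mpr (hYm w ((memVm w).mp hw)), Y.apply_symm_apply w⟩
  set e : Vp ≃ₗ[F] Vm := Y.ofSubmodules Vp Vm hmap with hedef
  have he : ∀ x : Vp, (e x : V) = Y x := fun x => rfl
  -- dimensions
  have hrk : Module.finrank F Vp + Module.finrank F Vm = Module.finrank F V :=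
    Submodule.finrank_add_eq_of_isCompl compl
  have hrkeq : Module.finrank F Vp = Module.finrank F Vm := e.finrank_eq
  have heven : Even (Module.finrank F V) :=
    ⟨Module.finrank F Vp, by omega⟩
  refine ⟨heven, ?_⟩
  -- orthogonality
  have horth : ∀ u w : V, X u = u → X w = -w → B u w = 0 := by
    intro u w hu hw
    have h1 : B u w = -(B u w) := by
      conv_lhs => rw [← hXiso u w, hu, hw, map_neg]
    have : (2 : F) * B u w = 0 := by rw [two_mul]; nth_rewrite 1 [h1]; ring
    rcases mul_eq_zero.mp this with h | h
    · exact absurd h h2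
    · exact h
  intro ι _ _ b
  -- the adapted basis
  set n := Module.finrank F Vp with hn
  set c : Module.Basis (Fin n) F Vp := Module.finBasis F Vp with hc
  set e2 : (Vp × Vp) ≃ₗ[F] V :=
    ((LinearEquiv.refl F Vp).prodCongr e).trans (Submodule.prodEquivOfIsCompl Vp Vm compl) with he2
  set b' : Module.Basis (Fin n ⊕ Fin n) F V := (c.prod c).map e2 with hb'
  have hb'l : ∀ i, b' (Sum.inl i) = (c i : V) := by
    intro i
    rw [hb', Module.Basis.map_apply]
    have : (c.prod c) (Sum.inl i) = (c i, 0) := by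
      ext <;> simp [Module.Basis.prod_apply_inl_fst, Module.Basis.prod_apply_inl_snd]
    rw [this, he2]
    simp [Submodule.coe_prodEquivOfIsCompl', LinearEquiv.prodCongr_apply]
  have hb'r : ∀ i, b' (Sum.inr i) = Y (c i : V) := by
    intro i
    rw [hb', Module.Basis.map_apply]
    have : (c.prod c) (Sum.inr i) = (0, c i) := by
      ext <;> simp [Module.Basis.prod_apply_inr_fst, Module.Basis.prod_apply_inr_snd]
    rw [this, he2]
    simp [Submodule.coe_prodEquivOfIsCompl', LinearEquiv.prodCongr_apply, he]
  -- Gram matrix of b'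
  set G : Matrix (Fin n) (Fin n) F := Matrix.of (fun i j => B (c i : V) (c j : V)) with hG
  have hblock : LinearMap.BilinForm.toMatrix b' B = Matrix.fromBlocks G 0 0 G := by
    ext i j
    rcases i with i | i <;> rcases j with j | j <;>
      simp only [LinearMap.BilinForm.toMatrix_apply, hb'l, hb'r, Matrix.fromBlocks_apply₁₁,
        Matrix.fromBlocks_apply₁₂, Matrix.fromBlocks_apply₂₁, Matrix.fromBlocks_apply₂₂,
        Matrix.zero_apply, hG, Matrix.of_apply]
    · exact horth _ _ ((memVp _).mp (c i).2) (hYp _ ((memVp _).mp (c j).2))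
    · rw [hsymm]
      exact horth _ _ ((memVp _).mp (c j).2) (hYp _ ((memVp _).mp (c i).2))
    · exact hYiso _ _
  have hdet' : (LinearMap.BilinForm.toMatrix b' B).det = G.det ^ 2 := by
    rw [hblock, Matrix.det_fromBlocks_zero₂₁, sq]
  -- reindex to ι
  set σ : (Fin n ⊕ Fin n) ≃ ι := b'.indexEquiv b with hσ
  set b'' : Module.Basis ι F V := b'.reindex σ with hb''
  have hdet'' : (LinearMap.BilinForm.toMatrix b'' B).det = G.det ^ 2 := by
    have hsub : LinearMap.BilinForm.toMatrix b'' B =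
        (LinearMap.BilinForm.toMatrix b' B).submatrix σ.symm σ.symm := by
      ext i j
      rw [LinearMap.BilinForm.toMatrix_apply, Matrix.submatrix_apply, LinearMap.BilinForm.toMatrix_apply,
        hb'', Module.Basis.reindex_apply, Module.Basis.reindex_apply]
    rw [hsub, Matrix.det_submatrix_equiv_self, hdet']
  -- change of basis
  set P : Matrix ι ι F := b''.toMatrix b with hP
  have hchg : P.transpose * LinearMap.BilinForm.toMatrix b'' B * P = LinearMap.BilinForm.toMatrix b B :=
    LinearMap.BilinForm.toMatrix_mul_basis_toMatrix b'' b B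
  have hMeq : (Matrix.of fun i j => B (b i) (b j)) = LinearMap.BilinForm.toMatrix b B := by
    ext i j
    rw [LinearMap.BilinForm.toMatrix_apply, Matrix.of_apply]
  have hdet : (LinearMap.BilinForm.toMatrix b B).det = (P.det * G.det) ^ 2 := by
    rw [← hchg, Matrix.det_mul, Matrix.det_mul, Matrix.det_transpose, hdet'']
    ring
  refine ⟨P.det * G.det, ?_, by rw [hMeq, hdet]⟩
  intro h0
  have hnd' : (LinearMap.BilinForm.toMatrix b B).det ≠ 0 :=
    (LinearMap.BilinForm.nondegenerate_iff_det_ne_zero b).mp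
      ⟨hnd, fun v hv => hnd v (fun u => by rw [hsymm]; exact hv u)⟩
  rw [hdet, h0] at hnd'
  simp at hnd'
end

section
/- Let q be an odd prime power and let V be a finite-dimensional vector space over F_q equipped with a nondegenerate bilinear form f which is either symmetric or alternating. Suppose X and Y are isometries of (V, f) satisfying XYX⁻¹Y⁻¹ = −id_V and X² = Y² = id_V. Let V₊ = ker(X − id) and V₋ = ker(X + id) be the ±1-eigenspaces of X. Then V = V₊ ⊕ V₋, f(V₊, V₋) = 0, the restrictions of f to V₊ and to V₋ are nondegenerate, dim V₊ = dim V₋ = (dim V)/2, and Y maps V₊ onto V₋ and V₋ onto V₊ (with Y restricted to V₊ and Y restricted to V₋ inverse to each other). -/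
/-- Let `q` be an odd prime power and `(V, B)` a finite-dimensional F_q-vector space with a
nondegenerate bilinear form which is symmetric or alternating.  Suppose `X, Y` are isometries
of `(V, B)` with `XYX⁻¹Y⁻¹ = -id` and `X² = Y² = id`.  Let `V₊ = ker(X - id)` and
`V₋ = ker(X + id)`.  Then `V = V₊ ⊕ V₋`, `B(V₊, V₋) = 0`, the restrictions of `B` to `V₊` and
`V₋` are nondegenerate, `dim V₊ = dim V₋ = (dim V)/2`, and `Y` maps `V₊` onto `V₋` and `V₋`
onto `V₊`. -/
theorem statement_15 (q : ℕ) (hq : Odd q) (hpp : IsPrimePow q)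
    (F : Type*) [Field F] [Fintype F] (hcard : Fintype.card F = q)
    (V : Type*) [AddCommGroup V] [Module F V] [FiniteDimensional F V]
    (B : LinearMap.BilinForm F V)
    (hsa : (∀ u v : V, B u v = B v u) ∨ (∀ v : V, B v v = 0))
    (hnd : ∀ u : V, (∀ v : V, B u v = 0) → u = 0)
    (X Y : V ≃ₗ[F] V)
    (hXiso : ∀ u v : V, B (X u) (X v) = B u v)
    (hYiso : ∀ u v : V, B (Y u) (Y v) = B u v)
    (hcomm : ∀ v : V, X (Y (X.symm (Y.symm v))) = -v)
    (hX2 : ∀ v : V, X (X v) = v)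
    (hY2 : ∀ v : V, Y (Y v) = v) :
    IsCompl (LinearMap.ker (X.toLinearMap - LinearMap.id))
        (LinearMap.ker (X.toLinearMap + LinearMap.id)) ∧
    (∀ u ∈ LinearMap.ker (X.toLinearMap - LinearMap.id),
      ∀ w ∈ LinearMap.ker (X.toLinearMap + LinearMap.id), B u w = 0) ∧
    (∀ u ∈ LinearMap.ker (X.toLinearMap - LinearMap.id),
      (∀ v ∈ LinearMap.ker (X.toLinearMap - LinearMap.id), B u v = 0) → u = 0) ∧
    (∀ u ∈ LinearMap.ker (X.toLinearMap + LinearMap.id),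
      (∀ v ∈ LinearMap.ker (X.toLinearMap + LinearMap.id), B u v = 0) → u = 0) ∧
    Module.finrank F (LinearMap.ker (X.toLinearMap - LinearMap.id)) =
      Module.finrank F (LinearMap.ker (X.toLinearMap + LinearMap.id)) ∧
    Module.finrank F V =
      2 * Module.finrank F (LinearMap.ker (X.toLinearMap - LinearMap.id)) ∧
    (LinearMap.ker (X.toLinearMap - LinearMap.id)).map Y.toLinearMap =
      LinearMap.ker (X.toLinearMap + LinearMap.id) ∧
    (LinearMap.ker (X.toLinearMap + LinearMap.id)).map Y.toLinearMap =
      LinearMap.ker (X.toLinearMap - LinearMap.id) := by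
  -- characteristic is odd
  have h2 : (2 : F) ≠ 0 := by
    intro h
    have hchar : ringChar F = 2 := by
      have := ringChar.spec F 2
      have hdvd : ringChar F ∣ 2 := (ringChar.spec F 2).mp (by exact_mod_cast h)
      have hprime := CharP.char_is_prime F (ringChar F)
      rcases (Nat.prime_two.eq_one_or_self_of_dvd _ hdvd) with h1 | h2
      · exact absurd h1 hprime.ne_one
      · exact h2
    have := FiniteField.even_card_of_char_two hchar
    rw [hcard] at this
    obtain ⟨k, hk⟩ := hq
    omega
  have hmemp : ∀ v : V, v ∈ LinearMap.ker (X.toLinearMap - LinearMap.id) ↔ X v = v := by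
    intro v
    simp [LinearMap.mem_ker, sub_eq_zero]
  have hmemm : ∀ v : V, v ∈ LinearMap.ker (X.toLinearMap + LinearMap.id) ↔ X v = -v := by
    intro v
    simp [LinearMap.mem_ker, add_eq_zero_iff_eq_neg]
  -- symm facts
  have hXsymm : ∀ v : V, X.symm v = X v := by
    intro v
    apply X.injective
    rw [X.apply_symm_apply, hX2]
  have hYsymm : ∀ v : V, Y.symm v = Y v := by
    intro v
    apply Y.injective
    rw [Y.apply_symm_apply, hY2]
  -- anticommutation
  have hanti : ∀ v : V, X (Y v) = - Y (X v) := by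
    intro v
    have := hcomm (Y (X v))
    rw [hXsymm, hYsymm, hY2, hX2] at this
    rw [this]
  -- IsCompl
  have hdisj : Disjoint (LinearMap.ker (X.toLinearMap - LinearMap.id))
      (LinearMap.ker (X.toLinearMap + LinearMap.id)) := by
    rw [Submodule.disjoint_def]
    intro v hv1 hv2
    rw [hmemp] at hv1; rw [hmemm] at hv2
    have : (2 : F) • v = 0 := by
      rw [two_smul]
      nth_rewrite 1 [← hv1]
      rw [hv2, neg_add_cancel]
    exact (smul_eq_zero_iff_right h2).mp this
  have hcod : Codisjoint (LinearMap.ker (X.toLinearMap - LinearMap.id))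
      (LinearMap.ker (X.toLinearMap + LinearMap.id)) := by
    rw [codisjoint_iff, eq_top_iff]
    intro v _
    rw [Submodule.mem_sup]
    refine ⟨(2 : F)⁻¹ • (v + X v), ?_, (2 : F)⁻¹ • (v - X v), ?_, ?_⟩
    · rw [hmemp]
      simp only [map_smul, map_add, hX2]
      rw [add_comm]
    · rw [hmemm]
      simp only [map_smul, map_sub, hX2]
      module
    · rw [← smul_add]
      have : v + X v + (v - X v) = (2 : F) • v := by
        rw [two_smul]; abel
      rw [this, smul_smul, inv_mul_cancel₀ h2, one_smul]
  have hcompl : IsCompl (LinearMap.ker (X.toLinearMap - LinearMap.id))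
      (LinearMap.ker (X.toLinearMap + LinearMap.id)) := ⟨hdisj, hcod⟩
  -- orthogonality
  have hortho : ∀ u ∈ LinearMap.ker (X.toLinearMap - LinearMap.id),
      ∀ w ∈ LinearMap.ker (X.toLinearMap + LinearMap.id), B u w = 0 := by
    intro u hu w hw
    rw [hmemp] at hu; rw [hmemm] at hw
    have := hXiso u w
    rw [hu, hw] at this
    simp only [map_neg, LinearMap.neg_apply] at this
    have h2B : (2 : F) * B u w = 0 := by
      rw [two_mul]
      nth_rewrite 1 [← this]
      ring
    exact (mul_eq_zero.mp h2B).resolve_left h2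
  have hortho' : ∀ u ∈ LinearMap.ker (X.toLinearMap + LinearMap.id),
      ∀ w ∈ LinearMap.ker (X.toLinearMap - LinearMap.id), B u w = 0 := by
    intro u hu w hw
    rw [hmemm] at hu; rw [hmemp] at hw
    have := hXiso u w
    rw [hu, hw] at this
    simp only [map_neg, LinearMap.neg_apply] at this
    have h2B : (2 : F) * B u w = 0 := by
      rw [two_mul]
      nth_rewrite 1 [← this]
      ring
    exact (mul_eq_zero.mp h2B).resolve_left h2
  -- maps under Y
  have hmap1 : (LinearMap.ker (X.toLinearMap - LinearMap.id)).map Y.toLinearMap =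
      LinearMap.ker (X.toLinearMap + LinearMap.id) := by
    apply le_antisymm
    · rintro _ ⟨u, hu, rfl⟩
      simp only [SetLike.mem_coe, hmemp] at hu
      rw [hmemm]
      show X (Y u) = - Y u
      rw [hanti, hu]
    · intro w hw
      rw [hmemm] at hw
      refine ⟨Y w, ?_, hY2 w⟩
      simp only [SetLike.mem_coe, hmemp]
      show X (Y w) = Y w
      rw [hanti, hw, map_neg, neg_neg]
  have hmap2 : (LinearMap.ker (X.toLinearMap + LinearMap.id)).map Y.toLinearMap =
      LinearMap.ker (X.toLinearMap - LinearMap.id) := by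
    apply le_antisymm
    · rintro _ ⟨u, hu, rfl⟩
      simp only [SetLike.mem_coe, hmemm] at hu
      rw [hmemp]
      show X (Y u) = Y u
      rw [hanti, hu, map_neg, neg_neg]
    · intro w hw
      rw [hmemp] at hw
      refine ⟨Y w, ?_, hY2 w⟩
      simp only [SetLike.mem_coe, hmemm]
      show X (Y w) = - Y w
      rw [hanti, hw]
  -- dimensions
  have hrank : Module.finrank F (LinearMap.ker (X.toLinearMap - LinearMap.id)) =
      Module.finrank F (LinearMap.ker (X.toLinearMap + LinearMap.id)) := by
    rw [← hmap1, LinearEquiv.finrank_map_eq]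
  have hsum := Submodule.finrank_add_eq_of_isCompl hcompl
  refine ⟨hcompl, hortho, ?_, ?_, hrank, by omega, hmap1, hmap2⟩
  · intro u hu h0
    apply hnd u
    intro v
    obtain ⟨a, ha, b, hb, rfl⟩ := Submodule.mem_sup.mp
      (by rw [codisjoint_iff] at hcod; rw [hcod]; trivial :
        v ∈ LinearMap.ker (X.toLinearMap - LinearMap.id) ⊔
          LinearMap.ker (X.toLinearMap + LinearMap.id))
    rw [map_add, h0 a ha, hortho u hu b hb, add_zero]
  · intro u hu h0
    apply hnd u
    intro v
    obtain ⟨a, ha, b, hb, rfl⟩ := Submodule.mem_sup.mp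
      (by rw [codisjoint_iff] at hcod; rw [hcod]; trivial :
        v ∈ LinearMap.ker (X.toLinearMap - LinearMap.id) ⊔
          LinearMap.ker (X.toLinearMap + LinearMap.id))
    rw [map_add, h0 b hb, hortho' u hu a ha, zero_add]
end
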